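/- Let s be a Turing degree, and let M be an s-computable structure that is s-computably cofinally ultrahomogeneous. If the Turing degree of EmbedInfo(M) is ≤_T s, then the canonical computable age 𝕂[M] has CcoAP(s). -/

import Mathlib

/- Self-contained framework for computable ages and cofinal Fraïssé limits. -/

namespace CFL

open Classical

/-! ### Oracle computability -/

/-- The characteristic partial function of a set of naturals. -/
noncomputable def chi (A : Set ℕ) : ℕ →. ℕ :=
  fun n => Part.some (if n ∈ A then 1 else 0)

/-- Codes for oracle partial recursive functions. -/
inductive OCode : Type
  | zero : OCode
  | succ : OCode
  | left : OCode
  | right : OCode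
  | oracle : OCode
  | pair : OCode → OCode → OCode
  | comp : OCode → OCode → OCode
  | prec : OCode → OCode → OCode
  | rfind' : OCode → OCode

/-- Evaluation of an oracle code relative to an oracle `O`. -/
def OCode.eval (O : ℕ →. ℕ) : OCode → ℕ →. ℕ
  | OCode.zero => pure 0
  | OCode.succ => Nat.succ
  | OCode.left => ↑fun n : ℕ => n.unpair.1
  | OCode.right => ↑fun n : ℕ => n.unpair.2
  | OCode.oracle => O
  | OCode.pair cf cg => fun n => Nat.pair <$> OCode.eval O cf n <*> OCode.eval O cg n
  | OCode.comp cf cg => fun n => OCode.eval O cg n >>= OCode.eval O cf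
  | OCode.prec cf cg =>
    Nat.unpaired fun a n =>
      n.rec (OCode.eval O cf a) fun y IH => do
        let i ← IH
        OCode.eval O cg (Nat.pair a (Nat.pair y i))
  | OCode.rfind' cf =>
    Nat.unpaired fun a m =>
      (Nat.rfind fun n => (fun m => m = 0) <$> OCode.eval O cf (Nat.pair a (n + m))).map
        (· + m)

/-- A numerical code of an `OCode`. -/
def OCode.encodeCode : OCode → ℕ
  | OCode.zero => 0
  | OCode.succ => 1
  | OCode.left => 2
  | OCode.right => 3
  | OCode.oracle => 4
  | OCode.pair cf cg => 4 * Nat.pair cf.encodeCode cg.encodeCode + 5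
  | OCode.comp cf cg => 4 * Nat.pair cf.encodeCode cg.encodeCode + 6
  | OCode.prec cf cg => 4 * Nat.pair cf.encodeCode cg.encodeCode + 7
  | OCode.rfind' cf => 4 * cf.encodeCode + 8

/-- `f` is a partial function recursive in the oracle set `O`. -/
def RecFunIn (O : Set ℕ) (f : ℕ →. ℕ) : Prop :=
  ∃ c : OCode, OCode.eval (chi O) c = f

/-- The code `c` computes the total function `f` relative to the oracle set `O`. -/
def ComputesIn (O : Set ℕ) (c : OCode) (f : ℕ → ℕ) : Prop :=
  ∀ n, OCode.eval (chi O) c n = Part.some (f n)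

/-- `f` is a total function computable in the oracle set `O`. -/
def TotalComputableIn (O : Set ℕ) (f : ℕ → ℕ) : Prop :=
  ∃ c : OCode, ComputesIn O c f

/-- The set `A` is computable in the oracle set `O`. -/
def SetRecIn (O A : Set ℕ) : Prop := RecFunIn O (chi A)

/-- Turing reducibility (on sets of naturals, regarded as representatives of
Turing degrees). -/
def TuringLE (A B : Set ℕ) : Prop := SetRecIn B A

/-- The set `A` is computably enumerable in the oracle set `O`. -/
def CEIn (O A : Set ℕ) : Prop :=
  ∃ c : OCode, ∀ n, n ∈ A ↔ (OCode.eval (chi O) c n).Dom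

/-- The Turing jump of a set of naturals. -/
def jump (O : Set ℕ) : Set ℕ :=
  { e | ∃ c : OCode, c.encodeCode = (Nat.unpair e).1 ∧
      (OCode.eval (chi O) c (Nat.unpair e).2).Dom }

/-- `0'`, the jump of the least degree. -/
def zeroJump : Set ℕ := jump ∅

/-- `0''`. -/
def zeroJump2 : Set ℕ := jump zeroJump

/-- `0'''`. -/
def zeroJump3 : Set ℕ := jump zeroJump2

/-! ### Languages and structures -/

/-- A (coded) first-order language: `relArity r = some k` means that `r` is the code of a
relation symbol of arity `k`, and similarly for function symbols. -/
structure Lang where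
  relArity : ℕ → Option ℕ
  funArity : ℕ → Option ℕ

/-- The language is computably represented. -/
def Lang.ComputableRep (L : Lang) : Prop :=
  TotalComputableIn ∅ (fun r => Encodable.encode (L.relArity r)) ∧
  TotalComputableIn ∅ (fun f => Encodable.encode (L.funArity f))

/-- A finite relational language. -/
def Lang.FiniteRelational (L : Lang) : Prop :=
  (∀ f, L.funArity f = none) ∧ { r | (L.relArity r).isSome = true }.Finite

/-- A finite language. -/
def Lang.FiniteLang (L : Lang) : Prop :=
  { r | (L.relArity r).isSome = true }.Finite ∧
  { f | (L.funArity f).isSome = true }.Finite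

/-- An `L`-structure with underlying set a set of naturals. -/
structure Str (L : Lang) where
  dom : Set ℕ
  rel : ℕ → List ℕ → Prop
  fn : ℕ → List ℕ → ℕ
  rel_valid : ∀ r as, rel r as → L.relArity r = some as.length ∧ ∀ x ∈ as, x ∈ dom
  fn_mem : ∀ f as, L.funArity f = some as.length → (∀ x ∈ as, x ∈ dom) → fn f as ∈ dom

variable {L : Lang}

/-- The (finite) tuple `as` lies in the structure `A`. -/
def TupleIn (A : Str L) (as : List ℕ) : Prop := ∀ x ∈ as, x ∈ A.dom

/-- Membership in the substructure of `A` generated by the tuple `s`. -/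
inductive InClosure (A : Str L) (s : List ℕ) : ℕ → Prop
  | base {x : ℕ} : x ∈ s → x ∈ A.dom → InClosure A s x
  | fn (f : ℕ) (as : List ℕ) : L.funArity f = some as.length →
      (∀ x ∈ as, InClosure A s x) → InClosure A s (A.fn f as)

theorem InClosure.mem_dom {A : Str L} {s : List ℕ} {x : ℕ}
    (h : InClosure A s x) : x ∈ A.dom := by
  induction h with
  | base _ hx => exact hx
  | fn f as ha _ ih => exact A.fn_mem f as ha ih

/-- The substructure of `A` generated by the tuple `s`. -/
def Str.sub (A : Str L) (s : List ℕ) : Str L where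
  dom := { x | InClosure A s x }
  rel r as := A.rel r as ∧ ∀ x ∈ as, InClosure A s x
  fn := A.fn
  rel_valid := fun r as h => ⟨(A.rel_valid r as h.1).1, h.2⟩
  fn_mem := fun f as ha hm => InClosure.fn f as ha hm

/-- `h` is an embedding of `A` into `B`. -/
def IsEmbMap (A B : Str L) (h : ℕ → ℕ) : Prop :=
  (∀ x ∈ A.dom, h x ∈ B.dom) ∧
  (∀ x ∈ A.dom, ∀ y ∈ A.dom, h x = h y → x = y) ∧
  (∀ r as, TupleIn A as → (A.rel r as ↔ B.rel r (as.map h))) ∧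
  (∀ f as, L.funArity f = some as.length → TupleIn A as →
    h (A.fn f as) = B.fn f (as.map h))

/-- `A` embeds into `B`. -/
def Embeds (A B : Str L) : Prop := ∃ h, IsEmbMap A B h

/-- `h` is an isomorphism of `A` onto `B`. -/
def IsIsoMap (A B : Str L) (h : ℕ → ℕ) : Prop :=
  IsEmbMap A B h ∧ ∀ y ∈ B.dom, ∃ x ∈ A.dom, h x = y

/-- `A` and `B` are isomorphic. -/
def Isom (A B : Str L) : Prop := ∃ h, IsIsoMap A B h

/-- `as ∼cl bs`: the coordinatewise map extends to an isomorphism of generated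
substructures. -/
def ClSim (A : Str L) (as : List ℕ) (B : Str L) (bs : List ℕ) : Prop :=
  ∃ h : ℕ → ℕ, as.map h = bs ∧ IsIsoMap (A.sub as) (B.sub bs) h

/-- `as ∼tuple bs`: equal length and the same pattern of equalities among coordinates. -/
def TupleSim (as bs : List ℕ) : Prop :=
  ∃ h h' : ℕ → ℕ, as.map h = bs ∧ bs.map h' = as

/-- `A` is finitely generated. -/
def Str.FG (A : Str L) : Prop :=
  ∃ s : List ℕ, TupleIn A s ∧ ∀ x, x ∈ A.dom ↔ InClosure A s x

/-- `g` is an automorphism of `M`. -/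
def IsAutoOf (M : Str L) (g : ℕ → ℕ) : Prop := IsIsoMap M M g

/-! ### Ages (as isomorphism-closed classes) -/

/-- `B` belongs to the age of `M`, i.e. `B` is isomorphic to a finitely generated
substructure of `M`. -/
def AgeMemOf (M : Str L) (B : Str L) : Prop :=
  ∃ as : List ℕ, TupleIn M as ∧ Isom B (M.sub as)

/-- The age of a structure `M`. -/
def ageOf (M : Str L) : Set (Str L) := { B | AgeMemOf M B }

/-- The hereditary property. -/
def HP (C : Set (Str L)) : Prop :=
  ∀ B ∈ C, ∀ as : List ℕ, TupleIn B as → B.sub as ∈ C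

/-- The joint embedding property. -/
def JEP (C : Set (Str L)) : Prop :=
  ∀ A ∈ C, ∀ B ∈ C, ∃ D ∈ C, Embeds A D ∧ Embeds B D

/-- Every pair of embeddings with domain `A` into members of `C` can be amalgamated
over `A` inside `C`. -/
def AmalgamatesOver (C : Set (Str L)) (A : Str L) : Prop :=
  ∀ B₀ ∈ C, ∀ B₁ ∈ C, ∀ f₀ f₁ : ℕ → ℕ, IsEmbMap A B₀ f₀ → IsEmbMap A B₁ f₁ →
    ∃ D ∈ C, ∃ g₀ g₁ : ℕ → ℕ, IsEmbMap B₀ D g₀ ∧ IsEmbMap B₁ D g₁ ∧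
      ∀ x ∈ A.dom, g₀ (f₀ x) = g₁ (f₁ x)

/-- The amalgamation property. -/
def AP (C : Set (Str L)) : Prop := ∀ A ∈ C, AmalgamatesOver C A

/-- `A` is an amalgamation base of the class `C`. -/
def AmalgBase (C : Set (Str L)) (A : Str L) : Prop := A ∈ C ∧ AmalgamatesOver C A

/-- The cofinal amalgamation property. -/
def CoAP (C : Set (Str L)) : Prop :=
  ∀ A ∈ C, ∃ A' : Str L, AmalgBase C A' ∧ Embeds A A'

/-! ### Computable ages -/

/-- An (abstract) enumerated age: for each index `i`, a generating tuple `tup i` and the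
structure `str i` it generates. -/
structure CompAge (L : Lang) where
  tup : ℕ → List ℕ
  str : ℕ → Str L
  tup_mem : ∀ i, TupleIn (str i) (tup i)
  gen : ∀ i x, x ∈ (str i).dom ↔ InClosure (str i) (tup i) x

/-- The class of structures represented by the enumerated age `K`. -/
def CompAge.cls (K : CompAge L) : Set (Str L) := { B | ∃ i, Isom B (K.str i) }

/-- The structure `M` is computable in the oracle set `s`. -/
def StrComputableIn (s : Set ℕ) (M : Str L) : Prop :=
  SetRecIn s M.dom ∧
  SetRecIn s { p | ∃ r as, TupleIn M as ∧ M.rel r as ∧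
      p = Nat.pair r (Encodable.encode as) } ∧
  SetRecIn s { p | ∃ f as b, L.funArity f = some as.length ∧ TupleIn M as ∧
      M.fn f as = b ∧ p = Nat.pair f (Nat.pair (Encodable.encode as) b) }

/-- The coded diagram of an enumerated age. -/
def CompAge.diag (K : CompAge L) : Set ℕ :=
  { p | ∃ i, p = Nat.pair 0 (Nat.pair i (Encodable.encode (K.tup i))) } ∪
  { p | ∃ i x, x ∈ (K.str i).dom ∧ p = Nat.pair 1 (Nat.pair i x) } ∪
  { p | ∃ i r as, TupleIn (K.str i) as ∧ (K.str i).rel r as ∧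
      p = Nat.pair 2 (Nat.pair i (Nat.pair r (Encodable.encode as))) } ∪
  { p | ∃ i r as, TupleIn (K.str i) as ∧ L.relArity r = some as.length ∧
      ¬ (K.str i).rel r as ∧
      p = Nat.pair 3 (Nat.pair i (Nat.pair r (Encodable.encode as))) } ∪
  { p | ∃ i f as b, TupleIn (K.str i) as ∧ L.funArity f = some as.length ∧
      (K.str i).fn f as = b ∧
      p = Nat.pair 4 (Nat.pair i (Nat.pair f (Nat.pair (Encodable.encode as) b))) }

/-- `K` is an `s`-computable age: its diagram is c.e. in `s` and each of its structures
is computable in `s`. -/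
def AgeComputableIn (s : Set ℕ) (K : CompAge L) : Prop :=
  CEIn s K.diag ∧ ∀ i, StrComputableIn s (K.str i)

/-- The embedding information of an enumerated age, as a set of naturals. -/
def EmbedInfo (K : CompAge L) : Set ℕ :=
  { p | ∃ k₀ b₀ k₁ b₁, TupleIn (K.str k₀) b₀ ∧ TupleIn (K.str k₁) b₁ ∧
      ClSim (K.str k₀) b₀ (K.str k₁) b₁ ∧
      p = Nat.pair k₀ (Nat.pair (Encodable.encode b₀)
            (Nat.pair k₁ (Encodable.encode b₁))) }

/-! ### Potential embeddings, spans, and amalgamation diagrams -/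

/-- A potential embedding: a pair of indices and a tuple in the codomain structure. -/
structure PotEmb where
  i : ℕ
  j : ℕ
  c : List ℕ

/-- A numerical code of a potential embedding. -/
def PotEmb.code (F : PotEmb) : ℕ :=
  Nat.pair F.i (Nat.pair F.j (Encodable.encode F.c))

/-- The potential embedding is well-formed with respect to `K`. -/
def PotEmb.Valid (K : CompAge L) (F : PotEmb) : Prop :=
  F.c.length = (K.tup F.i).length ∧ TupleIn (K.str F.j) F.c

/-- The potential embedding is an embedding. -/
def PotEmb.IsEmb (K : CompAge L) (F : PotEmb) : Prop :=
  ClSim (K.str F.i) (K.tup F.i) (K.str F.j) F.c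

/-- The potential embedding is an isomorphism (its range generates the codomain). -/
def PotEmb.IsIso (K : CompAge L) (F : PotEmb) : Prop :=
  F.IsEmb K ∧ ∀ x ∈ (K.str F.j).dom, InClosure (K.str F.j) F.c x

/-- `h` realizes the potential embedding `F` as a map on the domain structure. -/
def ExtMap (K : CompAge L) (F : PotEmb) (h : ℕ → ℕ) : Prop :=
  (K.tup F.i).map h = F.c ∧ IsEmbMap (K.str F.i) (K.str F.j) h

/-- `(F₀, F₁)` is a potential span. -/
def PotSpan (K : CompAge L) (F₀ F₁ : PotEmb) : Prop :=
  F₀.Valid K ∧ F₁.Valid K ∧ F₀.i = F₁.i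

/-- `(G₀, G₁)` is an amalgamation diagram over the potential span `(F₀, F₁)`. -/
def AmalgDiagOver (K : CompAge L) (F₀ F₁ G₀ G₁ : PotEmb) : Prop :=
  G₀.Valid K ∧ G₁.Valid K ∧ G₀.IsEmb K ∧
  G₀.i = F₀.j ∧ G₁.i = F₁.j ∧ G₀.j = G₁.j ∧
  (F₀.IsEmb K → F₁.IsEmb K → G₁.IsEmb K ∧
    ∀ h₀ h₁ : ℕ → ℕ, ExtMap K G₀ h₀ → ExtMap K G₁ h₁ →
      F₀.c.map h₀ = F₁.c.map h₁)

/-- `H` is the composition `F ∘ G` of potential embeddings (where `F` is an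
embedding realized by any `h` extending it). -/
def CompRel (K : CompAge L) (F G H : PotEmb) : Prop :=
  G.j = F.i ∧ H.i = G.i ∧ H.j = F.j ∧
  ∀ h : ℕ → ℕ, ExtMap K F h → H.c = G.c.map h

/-! ### Computable versions of HP, JEP, AP, coAP -/

/-- The `s`-computable hereditary property. -/
def CHP (s : Set ℕ) (K : CompAge L) : Prop :=
  ∃ c : OCode, ∀ i (b : List ℕ), TupleIn (K.str i) b →
    ∃ j, OCode.eval (chi s) c (Nat.pair i (Encodable.encode b)) = Part.some j ∧
      ClSim (K.str j) (K.tup j) (K.str i) b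

/-- The `s`-computable joint embedding property. -/
def CJEP (s : Set ℕ) (K : CompAge L) : Prop :=
  ∃ c : OCode, ∀ i j : ℕ, ∃ F G : PotEmb,
    OCode.eval (chi s) c (Nat.pair i j) = Part.some (Nat.pair F.code G.code) ∧
    F.Valid K ∧ G.Valid K ∧ F.IsEmb K ∧ G.IsEmb K ∧
    F.i = i ∧ G.i = j ∧ F.j = G.j

/-- The `s`-computable amalgamation property. -/
def CAP (s : Set ℕ) (K : CompAge L) : Prop :=
  ∃ c : OCode, ∀ F₀ F₁ : PotEmb, PotSpan K F₀ F₁ →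
    ∃ G₀ G₁ : PotEmb,
      OCode.eval (chi s) c (Nat.pair F₀.code F₁.code) =
        Part.some (Nat.pair G₀.code G₁.code) ∧
      AmalgDiagOver K F₀ F₁ G₀ G₁

/-- A family `W` of distinguished embeddings with amalgamation-base codomains, closed
under pre/post composition with isomorphisms, covering all domains. -/
def IsCoAPFamily (K : CompAge L) (W : Set PotEmb) : Prop :=
  (∀ F ∈ W, F.Valid K ∧ F.IsEmb K ∧ AmalgBase K.cls (K.str F.j)) ∧
  (∀ F ∈ W, ∀ G H : PotEmb, G.Valid K → G.IsIso K → G.j = F.i →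
      CompRel K F G H → H ∈ W) ∧
  (∀ F ∈ W, ∀ G H : PotEmb, G.Valid K → G.IsIso K → G.i = F.j →
      CompRel K G F H → H ∈ W) ∧
  (∀ i : ℕ, ∃ F ∈ W, F.i = i)

/-- The `s`-computable cofinal amalgamation property: there is an `s`-c.e. family of
distinguished embeddings onto amalgamation bases together with an `s`-computable
amalgamation function. -/
def CcoAP (s : Set ℕ) (K : CompAge L) : Prop :=
  ∃ W : Set PotEmb, IsCoAPFamily K W ∧
    CEIn s { p | ∃ F ∈ W, p = F.code } ∧
    ∃ c : OCode, ∀ F ∈ W, ∀ G₀ G₁ : PotEmb,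
      G₀.Valid K → G₁.Valid K → G₀.i = F.j → G₁.i = F.j →
      ∃ D₀ D₁ : PotEmb,
        OCode.eval (chi s) c (Nat.pair F.code (Nat.pair G₀.code G₁.code)) =
          Part.some (Nat.pair D₀.code D₁.code) ∧
        AmalgDiagOver K G₀ G₁ D₀ D₁

/-! ### Ultrahomogeneity -/

/-- `M` is ultrahomogeneous: every isomorphism between finitely generated substructures
extends to an automorphism. -/
def Ultrahomogeneous (M : Str L) : Prop :=
  ∀ as bs : List ℕ, TupleIn M as → TupleIn M bs → ClSim M as M bs →
    ∃ g : ℕ → ℕ, IsAutoOf M g ∧ as.map g = bs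

/-- `g` is a bijection of the underlying set of `M` with itself. -/
def BijOnDom (M : Str L) (g : ℕ → ℕ) : Prop :=
  (∀ x ∈ M.dom, g x ∈ M.dom) ∧
  (∀ x ∈ M.dom, ∀ y ∈ M.dom, g x = g y → x = y) ∧
  (∀ y ∈ M.dom, ∃ x ∈ M.dom, g x = y)

/-- `M` is `s`-computably ultrahomogeneous. -/
def CompUltrahom (s : Set ℕ) (M : Str L) : Prop :=
  ∃ c : OCode, ∀ as bs : List ℕ, TupleIn M as → TupleIn M bs →
    as.length = bs.length →
    ∃ e : ℕ,
      OCode.eval (chi s) c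
          (Nat.pair (Encodable.encode as) (Encodable.encode bs)) = Part.some e ∧
      ∃ c' : OCode, c'.encodeCode = e ∧ ∃ g : ℕ → ℕ, ComputesIn s c' g ∧
        BijOnDom M g ∧
        (ClSim M as M bs → IsAutoOf M g ∧ as.map g = bs)

/-! ### Cofinal ultrahomogeneity -/

/-- `M` is cofinally ultrahomogeneous. -/
def CofinallyUltrahomogeneous (M : Str L) : Prop :=
  ∀ as : List ℕ, TupleIn M as → ∃ bs : List ℕ, TupleIn M bs ∧
    (∀ x ∈ as, InClosure M bs x) ∧
    ∀ cs : List ℕ, TupleIn M cs → ClSim M bs M cs →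
      ∃ g : ℕ → ℕ, IsAutoOf M g ∧ bs.map g = cs

/-- `E` is a cofinal collection of tuples in `M`. -/
def IsCofinalCollection (M : Str L) (E : Set (List ℕ)) : Prop :=
  (∀ bs ∈ E, TupleIn M bs) ∧
  (∀ as : List ℕ, TupleIn M as → ∃ bs ∈ E, ∀ x ∈ as, InClosure M bs x) ∧
  (∀ bs ∈ E, ∀ as : List ℕ, (∀ x ∈ as, InClosure M bs x) → (as ++ bs) ∈ E) ∧
  (∀ as ∈ E, ∀ bs : List ℕ, TupleIn M bs → ClSim M as M bs → bs ∈ E)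

/-- `M` is cofinally ultrahomogeneous for the collection `E`: every isomorphism between
substructures generated by members of `E` extends to an automorphism. -/
def CofUltraFor (M : Str L) (E : Set (List ℕ)) : Prop :=
  ∀ as ∈ E, ∀ bs ∈ E, ClSim M as M bs →
    ∃ g : ℕ → ℕ, IsAutoOf M g ∧ as.map g = bs

/-- The set of codes of members of `E`. -/
def ECodes (E : Set (List ℕ)) : Set ℕ := { p | ∃ as ∈ E, p = Encodable.encode as }

/-- The functional part of `s`-computable cofinal ultrahomogeneity with respect to `E`. -/
def CofUltraFunIn (s : Set ℕ) (M : Str L) (E : Set (List ℕ)) : Prop :=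
  ∃ c : OCode, ∀ as ∈ E, ∀ bs : List ℕ, TupleIn M bs → TupleSim as bs →
    ∃ e : ℕ,
      OCode.eval (chi s) c
          (Nat.pair (Encodable.encode as) (Encodable.encode bs)) = Part.some e ∧
      ∃ c' : OCode, c'.encodeCode = e ∧ ∃ g : ℕ → ℕ, ComputesIn s c' g ∧
        BijOnDom M g ∧ as.map g = bs ∧
        (ClSim M as M bs → IsAutoOf M g)

/-- `M` is `s`-computably cofinally ultrahomogeneous with respect to `E`. -/
def CompCofUltrahomWrt (s : Set ℕ) (M : Str L) (E : Set (List ℕ)) : Prop :=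
  IsCofinalCollection M E ∧ SetRecIn s (ECodes E) ∧ CofUltraFunIn s M E

/-- `M` is `s`-computably cofinally ultrahomogeneous. -/
def CompCofUltrahom (s : Set ℕ) (M : Str L) : Prop :=
  ∃ E : Set (List ℕ), CompCofUltrahomWrt s M E

/-- The `s`-computable cofinal extension property with respect to `E`. -/
def CompCofExtProp (s : Set ℕ) (M : Str L) (E : Set (List ℕ)) : Prop :=
  ∃ c : OCode, ∀ as bs cs : List ℕ, as ∈ E → cs ∈ E → TupleIn M bs →
    (∀ x ∈ as, InClosure M cs x) → TupleSim as bs →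
    ∃ ds : List ℕ,
      OCode.eval (chi s) c
          (Nat.pair (Encodable.encode as)
            (Nat.pair (Encodable.encode bs) (Encodable.encode cs))) =
        Part.some (Encodable.encode ds) ∧
      TupleIn M ds ∧ TupleSim (as ++ cs) (bs ++ ds) ∧
      (ClSim M as M bs →
        ClSim M ds M cs ∧ (∀ x ∈ bs, InClosure M ds x) ∧
        ∀ h h' : ℕ → ℕ,
          ds.map h = cs → IsIsoMap (M.sub ds) (M.sub cs) h →
          bs.map h' = as → IsIsoMap (M.sub bs) (M.sub as) h' →
          bs.map h = bs.map h')

/-! ### Canonical ages and limits -/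

/-- `K` is a canonical age of `M` (relative to the oracle `t`): the enumeration of
generating tuples is `t`-computable, lists every finite tuple of `M` infinitely often,
and `str i` is the substructure generated by `tup i`. -/
def IsCanonicalAgeOf (t : Set ℕ) (K : CompAge L) (M : Str L) : Prop :=
  TotalComputableIn t (fun i => Encodable.encode (K.tup i)) ∧
  (∀ i, TupleIn M (K.tup i)) ∧
  (∀ as : List ℕ, TupleIn M as → ∀ n : ℕ, ∃ i, n ≤ i ∧ K.tup i = as) ∧
  (∀ i, K.str i = M.sub (K.tup i))

/-- `K` represents the age of `M`. -/
def RepresentsAgeOf (K : CompAge L) (M : Str L) : Prop :=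
  (∀ i, AgeMemOf M (K.str i)) ∧
  (∀ B : Str L, AgeMemOf M B → ∃ i, Isom B (K.str i))

/-- `M` is a cofinal Fraïssé limit of (the age represented by) `K`. -/
def CofinalFraisseLimitOf (K : CompAge L) (M : Str L) : Prop :=
  CofinallyUltrahomogeneous M ∧ RepresentsAgeOf K M

/-- The enumerated age `K` is uniformly finite. -/
def UniformlyFinite (K : CompAge L) : Prop :=
  L.FiniteLang ∧ ∃ f : ℕ → ℕ, TotalComputableIn ∅ f ∧
    ∀ i, ∀ as : List ℕ, TupleIn (K.str i) as →
      { x | InClosure (K.str i) as x }.Finite ∧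
      { x | InClosure (K.str i) as x }.ncard ≤ f as.length


/-! ### Auxiliary structural lemmas -/

section Aux

variable {L : Lang} {M A B C : Str L}

theorem list_map_eq_pointwise {f g : ℕ → ℕ} :
    ∀ {l : List ℕ}, l.map f = l.map g → ∀ x ∈ l, f x = g x := by
  intro l
  induction l with
  | nil => intro _ x hx; cases hx
  | cons a t ih =>
      intro h x hx
      simp only [List.map_cons, List.cons.injEq] at h
      rcases List.mem_cons.1 hx with hx | hx
      · exact hx ▸ h.1
      · exact ih h.2 x hx

theorem list_preimage {f : ℕ → ℕ} {P : ℕ → Prop} :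
    ∀ {l : List ℕ}, (∀ b ∈ l, ∃ x, P x ∧ f x = b) →
      ∃ l' : List ℕ, l'.map f = l ∧ ∀ x ∈ l', P x := by
  intro l
  induction l with
  | nil => intro _; exact ⟨[], rfl, by simp⟩
  | cons a t ih =>
      intro h
      obtain ⟨x, hx, hfx⟩ := h a (by simp)
      obtain ⟨l', hl', hP⟩ := ih fun b hb => h b (by simp [hb])
      exact ⟨x :: l', by simp [hfx, hl'], by
        intro y hy; rcases List.mem_cons.1 hy with hy | hy
        · exact hy ▸ hx
        · exact hP y hy⟩

theorem inClosure_trans {as bs : List ℕ} {x : ℕ}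
    (hab : ∀ y ∈ as, InClosure M bs y) (hx : InClosure M as x) :
    InClosure M bs x := by
  induction hx with
  | base hmem _ => exact hab _ hmem
  | fn f l ha _ ih => exact InClosure.fn f l ha ih

theorem inClosure_sub_iff {u a : List ℕ} (hu : ∀ y ∈ a, InClosure M u y) {x : ℕ} :
    InClosure (M.sub u) a x ↔ InClosure M a x := by
  constructor
  · intro h
    induction h with
    | base hmem hdom => exact InClosure.base hmem hdom.mem_dom
    | fn f l ha _ ih => exact InClosure.fn f l ha ih
  · intro h
    induction h with
    | base hmem hdom => exact InClosure.base hmem (hu _ hmem)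
    | fn f l ha _ ih => exact InClosure.fn f l ha ih

theorem Str.ext' {A B : Str L} (h1 : A.dom = B.dom) (h2 : A.rel = B.rel)
    (h3 : A.fn = B.fn) : A = B := by
  cases A; cases B
  cases h1; cases h2; cases h3
  rfl

theorem sub_eq_of_cl {a b : List ℕ} (h : ∀ x, InClosure M a x ↔ InClosure M b x) :
    M.sub a = M.sub b := by
  refine Str.ext' (Set.ext fun x => h x) ?_ rfl
  funext r as
  exact propext ⟨fun ⟨hr, hm⟩ => ⟨hr, fun x hx => (h x).1 (hm x hx)⟩,
    fun ⟨hr, hm⟩ => ⟨hr, fun x hx => (h x).2 (hm x hx)⟩⟩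

theorem sub_sub {u a : List ℕ} (hu : ∀ y ∈ a, InClosure M u y) :
    (M.sub u).sub a = M.sub a := by
  refine Str.ext' (Set.ext fun x => inClosure_sub_iff hu) ?_ rfl
  funext r as
  show ((M.rel r as ∧ ∀ x ∈ as, InClosure M u x) ∧ ∀ x ∈ as, InClosure (M.sub u) a x) =
    (M.rel r as ∧ ∀ x ∈ as, InClosure M a x)
  refine propext ⟨fun ⟨⟨hr, _⟩, hm⟩ => ⟨hr, fun x hx => (inClosure_sub_iff hu).1 (hm x hx)⟩,
    fun ⟨hr, hm⟩ => ⟨⟨hr, fun x hx => inClosure_trans hu (hm x hx)⟩,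
      fun x hx => (inClosure_sub_iff hu).2 (hm x hx)⟩⟩

theorem cl_append_iff {a b : List ℕ} (h : ∀ x ∈ b, InClosure M a x) (x : ℕ) :
    InClosure M (a ++ b) x ↔ InClosure M a x := by
  constructor
  · intro hx
    induction hx with
    | base hmem hdom =>
        rcases List.mem_append.1 hmem with hm | hm
        · exact InClosure.base hm hdom
        · exact h _ hm
    | fn f l ha _ ih => exact InClosure.fn f l ha ih
  · intro hx
    induction hx with
    | base hmem hdom => exact InClosure.base (List.mem_append_left _ hmem) hdom
    | fn f l ha _ ih => exact InClosure.fn f l ha ih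

theorem sub_append_eq {a b : List ℕ} (h : ∀ x ∈ b, InClosure M a x) :
    M.sub (a ++ b) = M.sub a :=
  sub_eq_of_cl (cl_append_iff h)

end Aux


section Aux2

variable {L : Lang} {M A B C : Str L} {a b c t : List ℕ} {f g : ℕ → ℕ}

theorem list_map_id_on {φ : ℕ → ℕ} :
    ∀ {l : List ℕ}, (∀ x ∈ l, φ x = x) → l.map φ = l := by
  intro l
  induction l with
  | nil => intro _; rfl
  | cons a t ih =>
      intro h
      simp only [List.map_cons]
      rw [h a (by simp), ih fun x hx => h x (by simp [hx])]

theorem list_map_congr_on {φ ψ : ℕ → ℕ} :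
    ∀ {l : List ℕ}, (∀ x ∈ l, φ x = ψ x) → l.map φ = l.map ψ := by
  intro l
  induction l with
  | nil => intro _; rfl
  | cons a t ih =>
      intro h
      simp only [List.map_cons]
      rw [h a (by simp), ih fun x hx => h x (by simp [hx])]

theorem tupleIn_map (hf : IsEmbMap A B f) (ha : TupleIn A a) : TupleIn B (a.map f) := by
  intro y hy
  obtain ⟨x, hx, rfl⟩ := List.mem_map.1 hy
  exact hf.1 x (ha x hx)

theorem isIsoMap_id : IsIsoMap A A id := by
  refine ⟨⟨fun x hx => hx, fun x _ y _ h => h, ?_, ?_⟩, fun y hy => ⟨y, hy, rfl⟩⟩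
  · intro r as _; rw [List.map_id]
  · intro fc as _ _; rw [List.map_id]; rfl

theorem embMap_comp (hf : IsEmbMap A B f) (hg : IsEmbMap B C g) :
    IsEmbMap A C (g ∘ f) := by
  obtain ⟨hd, hi, hr, hfn⟩ := hf
  obtain ⟨hd', hi', hr', hfn'⟩ := hg
  refine ⟨fun x hx => hd' _ (hd _ hx),
    fun x hx y hy h => hi x hx y hy (hi' _ (hd _ hx) _ (hd _ hy) h), ?_, ?_⟩
  · intro r as has
    have h2 : TupleIn B (as.map f) := tupleIn_map ⟨hd, hi, hr, hfn⟩ has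
    rw [hr r as has, hr' r _ h2, List.map_map]
  · intro fc as harity has
    have h2 : TupleIn B (as.map f) := tupleIn_map ⟨hd, hi, hr, hfn⟩ has
    show g (f (A.fn fc as)) = _
    rw [hfn fc as harity has, hfn' fc _ (by rw [List.length_map]; exact harity) h2,
      List.map_map]

theorem isoMap_comp (hf : IsIsoMap A B f) (hg : IsIsoMap B C g) :
    IsIsoMap A C (g ∘ f) := by
  refine ⟨embMap_comp hf.1 hg.1, fun z hz => ?_⟩
  obtain ⟨y, hy, rfl⟩ := hg.2 z hz
  obtain ⟨x, hx, rfl⟩ := hf.2 y hy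
  exact ⟨x, hx, rfl⟩

theorem emb_of_emb_into_sub (hf : IsEmbMap A (B.sub b) f) : IsEmbMap A B f := by
  obtain ⟨hd, hi, hr, hfn⟩ := hf
  refine ⟨fun x hx => (hd x hx).mem_dom, hi, ?_, ?_⟩
  · intro r as has
    rw [hr r as has]
    exact ⟨fun h => h.1, fun h => ⟨h, fun y hy => by
      obtain ⟨x, hx, rfl⟩ := List.mem_map.1 hy; exact hd x (has x hx)⟩⟩
  · intro fc as harity has
    exact hfn fc as harity has

theorem emb_corestrict (hf : IsEmbMap A B f) (hcl : ∀ x ∈ A.dom, InClosure B b (f x)) :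
    IsEmbMap A (B.sub b) f := by
  obtain ⟨hd, hi, hr, hfn⟩ := hf
  refine ⟨fun x hx => hcl x hx, hi, ?_, ?_⟩
  · intro r as has
    rw [hr r as has]
    exact ⟨fun h => ⟨h, fun y hy => by
      obtain ⟨x, hx, rfl⟩ := List.mem_map.1 hy; exact hcl x (has x hx)⟩, fun h => h.1⟩
  · intro fc as harity has
    exact hfn fc as harity has

theorem emb_restrict_fwd (hf : IsEmbMap A B f) {x : ℕ}
    (hx : InClosure A a x) : InClosure B (a.map f) (f x) := by
  induction hx with
  | base hm hd => exact InClosure.base (List.mem_map_of_mem (f := f) hm) (hf.1 _ hd)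
  | fn fc l harity hml ih =>
      rw [hf.2.2.2 fc l harity fun y hy => (hml y hy).mem_dom]
      exact InClosure.fn fc (l.map f) (by rw [List.length_map]; exact harity)
        fun y hy => by obtain ⟨x', hx', rfl⟩ := List.mem_map.1 hy; exact ih x' hx'

theorem emb_restrict_bwd (hf : IsEmbMap A B f) (ha : TupleIn A a) {y : ℕ}
    (hy : InClosure B (a.map f) y) : ∃ x, InClosure A a x ∧ f x = y := by
  induction hy with
  | base hm _ =>
      obtain ⟨x, hx, rfl⟩ := List.mem_map.1 hm
      exact ⟨x, InClosure.base hx (ha x hx), rfl⟩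
  | fn fc l harity hml ih =>
      obtain ⟨l', hl', hP⟩ := list_preimage (P := fun x => InClosure A a x) ih
      have harity' : L.funArity fc = some l'.length := by
        rw [← hl', List.length_map] at harity; exact harity
      refine ⟨A.fn fc l', InClosure.fn fc l' harity' hP, ?_⟩
      rw [hf.2.2.2 fc l' harity' fun x hx => (hP x hx).mem_dom, hl']

theorem emb_restrict (hf : IsEmbMap A B f) (ha : TupleIn A a) :
    IsIsoMap (A.sub a) (B.sub (a.map f)) f := by
  refine ⟨⟨fun x hx => emb_restrict_fwd hf hx,
    fun x hx y hy h => hf.2.1 x hx.mem_dom y hy.mem_dom h, ?_, ?_⟩, ?_⟩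
  · intro r as has
    constructor
    · rintro ⟨hr, hm⟩
      exact ⟨(hf.2.2.1 r as fun x hx => (has x hx).mem_dom).1 hr,
        fun y hy => by obtain ⟨x, hx, rfl⟩ := List.mem_map.1 hy
                       exact emb_restrict_fwd hf (has x hx)⟩
    · rintro ⟨hr, _⟩
      exact ⟨(hf.2.2.1 r as fun x hx => (has x hx).mem_dom).2 hr, has⟩
  · intro fc as harity has
    exact hf.2.2.2 fc as harity fun x hx => (has x hx).mem_dom
  · intro y hy
    obtain ⟨x, hx, rfl⟩ := emb_restrict_bwd hf ha hy
    exact ⟨x, hx, rfl⟩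

theorem sub_incl : IsEmbMap (A.sub t) A id :=
  emb_of_emb_into_sub (isIsoMap_id (A := A.sub t)).1

theorem isoMap_inv (hf : IsIsoMap A B f) :
    ∃ g, IsIsoMap B A g ∧ (∀ x ∈ A.dom, g (f x) = x) ∧ ∀ y ∈ B.dom, f (g y) = y := by
  classical
  refine ⟨fun y => if h : ∃ x ∈ A.dom, f x = y then h.choose else y, ?_, ?_, ?_⟩
  rotate_left
  · intro x hx
    have hex : ∃ x' ∈ A.dom, f x' = f x := ⟨x, hx, rfl⟩
    simp only [dif_pos hex]
    exact hf.1.2.1 _ hex.choose_spec.1 _ hx hex.choose_spec.2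
  · intro y hy
    have hex : ∃ x ∈ A.dom, f x = y := hf.2 y hy
    simp only [dif_pos hex]
    exact hex.choose_spec.2
  · -- the main iso property
    set g : ℕ → ℕ := fun y => if h : ∃ x ∈ A.dom, f x = y then h.choose else y with hgdef
    have hg1 : ∀ y ∈ B.dom, g y ∈ A.dom ∧ f (g y) = y := by
      intro y hy
      have hex : ∃ x ∈ A.dom, f x = y := hf.2 y hy
      simp only [hgdef, dif_pos hex]
      exact hex.choose_spec
    have hgf : ∀ x ∈ A.dom, g (f x) = x := by
      intro x hx
      have hex : ∃ x' ∈ A.dom, f x' = f x := ⟨x, hx, rfl⟩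
      simp only [hgdef, dif_pos hex]
      exact hf.1.2.1 _ hex.choose_spec.1 _ hx hex.choose_spec.2
    refine ⟨⟨fun y hy => (hg1 y hy).1,
      fun y hy y' hy' h => by
        rw [← (hg1 y hy).2, ← (hg1 y' hy').2, h], ?_, ?_⟩, ?_⟩
    · intro r bs hbs
      have hmapid : (bs.map g).map f = bs := by
        rw [List.map_map]
        exact list_map_id_on fun y hy => (hg1 y (hbs y hy)).2
      have htg : TupleIn A (bs.map g) := by
        intro x hx
        obtain ⟨y, hy, rfl⟩ := List.mem_map.1 hx
        exact (hg1 y (hbs y hy)).1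
      calc B.rel r bs ↔ B.rel r ((bs.map g).map f) := by rw [hmapid]
        _ ↔ A.rel r (bs.map g) := (hf.1.2.2.1 r (bs.map g) htg).symm
    · intro fc bs harity hbs
      have hmapid : (bs.map g).map f = bs := by
        rw [List.map_map]
        exact list_map_id_on fun y hy => (hg1 y (hbs y hy)).2
      have htg : TupleIn A (bs.map g) := by
        intro x hx
        obtain ⟨y, hy, rfl⟩ := List.mem_map.1 hx
        exact (hg1 y (hbs y hy)).1
      have harity' : L.funArity fc = some (bs.map g).length := by
        rw [List.length_map]; exact harity
      have h1 : B.fn fc bs = f (A.fn fc (bs.map g)) := by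
        rw [hf.1.2.2.2 fc (bs.map g) harity' htg, hmapid]
      rw [h1, hgf _ (A.fn_mem fc (bs.map g) harity' htg)]
    · intro x hx
      exact ⟨f x, hf.1.1 x hx, hgf x hx⟩

theorem ClSim.length_eq (h : ClSim A a B b) : b.length = a.length := by
  obtain ⟨f, hm, _⟩ := h
  rw [← hm, List.length_map]

theorem clSim_refl (ha : TupleIn A a) : ClSim A a A a :=
  ⟨id, List.map_id a, isIsoMap_id⟩

theorem clSim_trans (h1 : ClSim A a B b) (h2 : ClSim B b C c) : ClSim A a C c := by
  obtain ⟨f, hfm, hfi⟩ := h1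
  obtain ⟨g, hgm, hgi⟩ := h2
  exact ⟨g ∘ f, by rw [← List.map_map, hfm, hgm], isoMap_comp hfi hgi⟩

theorem clSim_symm (ha : TupleIn A a) (h : ClSim A a B b) : ClSim B b A a := by
  obtain ⟨f, hm, hi⟩ := h
  obtain ⟨g, hgi, hgf, _⟩ := isoMap_inv hi
  refine ⟨g, ?_, hgi⟩
  rw [← hm, List.map_map]
  exact list_map_id_on fun x hx => hgf x (InClosure.base hx (ha x hx))

theorem clSim_tupleSim (ha : TupleIn A a) (h : ClSim A a B b) : TupleSim a b := by
  obtain ⟨g, hgm, _⟩ := clSim_symm ha h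
  obtain ⟨f, hm, _⟩ := h
  exact ⟨f, g, hm, hgm⟩

theorem emb_unique {f₀ f₁ : ℕ → ℕ} (h₀ : IsEmbMap A B f₀) (h₁ : IsEmbMap A B f₁)
    (hgen : ∀ x ∈ A.dom, InClosure A t x) (ht : t.map f₀ = t.map f₁) :
    ∀ x ∈ A.dom, f₀ x = f₁ x := by
  intro x hx
  have hcl := hgen x hx
  clear hx
  induction hcl with
  | base hm _ => exact list_map_eq_pointwise ht _ hm
  | fn fc l harity hml ih =>
      have htl : TupleIn A l := fun y hy => (hml y hy).mem_dom
      rw [h₀.2.2.2 fc l harity htl, h₁.2.2.2 fc l harity htl,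
        list_map_congr_on fun y hy => ih y hy]

end Aux2


section Main

variable {L : Lang} {M : Str L} {K : CompAge L} {E : Set (List ℕ)} {s : Set ℕ}

/-- The code of a quadruple as used in `EmbedInfo`. -/
def EIcode (k₀ : ℕ) (b₀ : List ℕ) (k₁ : ℕ) (b₁ : List ℕ) : ℕ :=
  Nat.pair k₀ (Nat.pair (Encodable.encode b₀) (Nat.pair k₁ (Encodable.encode b₁)))

theorem EI_mem_iff {k₀ k₁ : ℕ} {b₀ b₁ : List ℕ} :
    EIcode k₀ b₀ k₁ b₁ ∈ EmbedInfo K ↔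
      TupleIn (K.str k₀) b₀ ∧ TupleIn (K.str k₁) b₁ ∧
        ClSim (K.str k₀) b₀ (K.str k₁) b₁ := by
  constructor
  · rintro ⟨k₀', b₀', k₁', b₁', h1, h2, h3, heq⟩
    unfold EIcode at heq
    rw [Nat.pair_eq_pair] at heq
    obtain ⟨hk₀, heq⟩ := heq
    rw [Nat.pair_eq_pair] at heq
    obtain ⟨hb₀, heq⟩ := heq
    rw [Nat.pair_eq_pair] at heq
    obtain ⟨hk₁, hb₁⟩ := heq
    have hb₀' : b₀ = b₀' := Encodable.encode_injective hb₀
    have hb₁' : b₁ = b₁' := Encodable.encode_injective hb₁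
    subst hk₀; subst hk₁; subst hb₀'; subst hb₁'
    exact ⟨h1, h2, h3⟩
  · rintro ⟨h1, h2, h3⟩
    exact ⟨k₀, b₀, k₁, b₁, h1, h2, h3, rfl⟩

variable (hstr : ∀ i, K.str i = M.sub (K.tup i))
variable (htupM : ∀ i, TupleIn M (K.tup i))

include htupM in
theorem tup_self_cl (i : ℕ) : ∀ x ∈ K.tup i, InClosure M (K.tup i) x :=
  fun x hx => InClosure.base hx (htupM i x hx)

include hstr in
theorem tupleIn_S_iff {j : ℕ} {a : List ℕ} :
    TupleIn (K.str j) a ↔ ∀ x ∈ a, InClosure M (K.tup j) x := by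
  rw [hstr j]; exact Iff.rfl

include hstr in
theorem S_sub {j : ℕ} {a : List ℕ} (ha : ∀ x ∈ a, InClosure M (K.tup j) x) :
    (K.str j).sub a = M.sub a := by
  rw [hstr j]; exact sub_sub ha

include hstr in
theorem clSim_S_iff {i j : ℕ} {a b : List ℕ}
    (ha : ∀ x ∈ a, InClosure M (K.tup i) x)
    (hb : ∀ x ∈ b, InClosure M (K.tup j) x) :
    ClSim (K.str i) a (K.str j) b ↔ ClSim M a M b := by
  unfold ClSim
  rw [S_sub hstr ha, S_sub hstr hb]

include hstr htupM in
theorem S_self_sub (i : ℕ) : (K.str i).sub (K.tup i) = K.str i := by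
  rw [hstr i]
  exact sub_sub (tup_self_cl htupM i)

include hstr htupM in
theorem extMap_of_isEmb {F : PotEmb} (hF : F.IsEmb K) :
    ∃ h, ExtMap K F h ∧ IsIsoMap (K.str F.i) ((K.str F.j).sub F.c) h := by
  obtain ⟨h, hm, hi⟩ := hF
  rw [S_self_sub hstr htupM F.i] at hi
  exact ⟨h, ⟨hm, emb_of_emb_into_sub hi.1⟩, hi⟩

/-- Indices whose structure is generated by a member of `E`. -/
def GoodCod (K : CompAge L) (E : Set (List ℕ)) (j : ℕ) : Prop :=
  ∃ cs : List ℕ, TupleIn (K.str j) cs ∧ (K.tup j ++ cs) ∈ E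

/-- The distinguished family of embeddings. -/
def Wfam (K : CompAge L) (E : Set (List ℕ)) : Set PotEmb :=
  { F | F.Valid K ∧ F.IsEmb K ∧ GoodCod K E F.j }

theorem ultra_exists (hE : IsCofinalCollection M E) (hcu : CofUltraFunIn s M E) :
    ∀ as ∈ E, ∀ bs : List ℕ, TupleIn M bs → ClSim M as M bs →
      ∃ g : ℕ → ℕ, IsAutoOf M g ∧ as.map g = bs := by
  intro as hasE bs hbs hcl
  obtain ⟨c, hc⟩ := hcu
  obtain ⟨e, _, c', _, g, _, _, hmap, himp⟩ :=
    hc as hasE bs hbs (clSim_tupleSim (hE.1 as hasE) hcl)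
  exact ⟨g, himp hcl, hmap⟩

end Main


section Main2

variable {L : Lang} {M : Str L} {K : CompAge L} {E : Set (List ℕ)} {s : Set ℕ}
variable (hstr : ∀ i, K.str i = M.sub (K.tup i))
variable (htupM : ∀ i, TupleIn M (K.tup i))
variable (hdense : ∀ as : List ℕ, TupleIn M as → ∀ n : ℕ, ∃ i, n ≤ i ∧ K.tup i = as)
variable (hE : IsCofinalCollection M E)
variable (hcu : CofUltraFunIn s M E)

include hstr in
theorem emb_S_M {i : ℕ} {A : Str L} {f : ℕ → ℕ} (h : IsEmbMap A (K.str i) f) :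
    IsEmbMap A M f := by
  rw [hstr i] at h
  exact emb_of_emb_into_sub h

include hstr htupM hdense hE hcu in
theorem goodCod_amalg {j : ℕ} (hj : GoodCod K E j) :
    AmalgamatesOver K.cls (K.str j) := by
  obtain ⟨cs, hcsIn, haE⟩ := hj
  set a := K.tup j ++ cs with ha
  have hcscl : ∀ x ∈ cs, InClosure M (K.tup j) x := (tupleIn_S_iff hstr).1 hcsIn
  have hacl : ∀ x ∈ a, InClosure M (K.tup j) x := by
    intro x hx
    rcases List.mem_append.1 hx with h | h
    · exact InClosure.base h (htupM j x h)
    · exact hcscl x h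
  have hSj : K.str j = M.sub a := by
    rw [hstr j, ha]
    exact (sub_append_eq hcscl).symm
  have haM : TupleIn M a := fun x hx => (hacl x hx).mem_dom
  have haSj : TupleIn (K.str j) a := by
    rw [hSj]; exact fun x hx => InClosure.base hx (haM x hx)
  have hgen : ∀ x ∈ (K.str j).dom, InClosure (K.str j) a x := by
    rw [hSj]
    intro x hx
    exact (inClosure_sub_iff fun y hy => InClosure.base hy (haM y hy)).2 hx
  have hidemb : IsEmbMap (K.str j) M id := by rw [hSj]; exact sub_incl
  have main : ∀ (B : Str L) (i : ℕ) (φ f : ℕ → ℕ), IsIsoMap B (K.str i) φ →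
      IsEmbMap (K.str j) B f →
      ∃ (e : ℕ → ℕ) (d : List ℕ), IsEmbMap B M e ∧
        (∀ x ∈ (K.str j).dom, e (f x) = x) ∧ TupleIn M d ∧
        (∀ y ∈ B.dom, InClosure M d (e y)) := by
    intro B i φ f hφ hf
    have hφM : IsEmbMap B M φ := emb_S_M hstr hφ.1
    have hη : IsEmbMap (K.str j) M (φ ∘ f) := embMap_comp hf hφM
    have hcl1 : ClSim M a M (a.map (φ ∘ f)) := by
      refine ⟨φ ∘ f, rfl, ?_⟩
      have h2 := emb_restrict hη haSj
      rwa [S_sub hstr hacl] at h2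
    have hbM : TupleIn M (a.map (φ ∘ f)) := by
      rw [hSj] at hη
      exact tupleIn_map hη (by rw [← hSj]; exact haSj)
    have hbE : a.map (φ ∘ f) ∈ E := hE.2.2.2 a haE _ hbM hcl1
    obtain ⟨γ, hγauto, hγmap⟩ :=
      ultra_exists hE hcu _ hbE a haM (clSim_symm haM hcl1)
    have hγM : IsEmbMap M M γ := hγauto.1
    have he : IsEmbMap B M (γ ∘ φ) := embMap_comp hφM hγM
    have hef : IsEmbMap (K.str j) M (γ ∘ (φ ∘ f)) := embMap_comp hη hγM
    have hmapse : a.map (γ ∘ (φ ∘ f)) = a := by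
      rw [← List.map_map]
      exact hγmap
    have hid : ∀ x ∈ (K.str j).dom, γ (φ (f x)) = x := by
      have huniq := emb_unique hef hidemb hgen (by rw [hmapse, List.map_id])
      intro x hx
      exact huniq x hx
    obtain ⟨φ', hφ'iso, hφ'l, hφ'r⟩ := isoMap_inv hφ
    set u := (K.tup i).map φ' with hu_def
    have hu : TupleIn B u := tupleIn_map hφ'iso.1 (K.tup_mem i)
    have hugen : ∀ y ∈ B.dom, InClosure B u y := by
      intro y hy
      obtain ⟨x, hx, rfl⟩ := hφ'iso.2 y hy
      exact emb_restrict_fwd hφ'iso.1 ((K.gen i x).1 hx)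
    refine ⟨γ ∘ φ, u.map (γ ∘ φ), he, fun x hx => hid x hx, tupleIn_map he hu, ?_⟩
    intro y hy
    exact emb_restrict_fwd he (hugen y hy)
  intro B₀ hB₀ B₁ hB₁ f₀ f₁ hf₀ hf₁
  obtain ⟨i₀, φ₀, hφ₀⟩ := hB₀
  obtain ⟨i₁, φ₁, hφ₁⟩ := hB₁
  obtain ⟨e₀, d₀, he₀, hid₀, hd₀M, hd₀cl⟩ := main B₀ i₀ φ₀ f₀ hφ₀ hf₀
  obtain ⟨e₁, d₁, he₁, hid₁, hd₁M, hd₁cl⟩ := main B₁ i₁ φ₁ f₁ hφ₁ hf₁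
  have hdM : TupleIn M (d₀ ++ d₁) := by
    intro x hx
    rcases List.mem_append.1 hx with h | h
    · exact hd₀M x h
    · exact hd₁M x h
  obtain ⟨istar, _, histar⟩ := hdense (d₀ ++ d₁) hdM 0
  refine ⟨M.sub (d₀ ++ d₁), ⟨istar, ?_⟩, e₀, e₁, ?_, ?_, ?_⟩
  · rw [hstr istar, histar]
    exact ⟨id, isIsoMap_id⟩
  · refine emb_corestrict he₀ fun y hy => ?_
    exact inClosure_trans
      (fun z hz => InClosure.base (List.mem_append_left _ hz) (hd₀M z hz)) (hd₀cl y hy)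
  · refine emb_corestrict he₁ fun y hy => ?_
    exact inClosure_trans
      (fun z hz => InClosure.base (List.mem_append_right _ hz) (hd₁M z hz)) (hd₁cl y hy)
  · intro x hx
    show e₀ (f₀ x) = e₁ (f₁ x)
    rw [hid₀ x hx, hid₁ x hx]

end Main2


section Main3

variable {L : Lang} {M : Str L} {K : CompAge L} {E : Set (List ℕ)} {s : Set ℕ}
variable (hstr : ∀ i, K.str i = M.sub (K.tup i))
variable (htupM : ∀ i, TupleIn M (K.tup i))
variable (hdense : ∀ as : List ℕ, TupleIn M as → ∀ n : ℕ, ∃ i, n ≤ i ∧ K.tup i = as)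
variable (hE : IsCofinalCollection M E)
variable (hcu : CofUltraFunIn s M E)

include hstr htupM hdense hE hcu in
theorem Wfam_isFamily : IsCoAPFamily K (Wfam K E) := by
  refine ⟨?_, ?_, ?_, ?_⟩
  · -- members are valid embeddings with amalgamation base codomains
    rintro F ⟨hv, he, hcond⟩
    exact ⟨hv, he, ⟨⟨F.j, id, isIsoMap_id⟩,
      goodCod_amalg hstr htupM hdense hE hcu hcond⟩⟩
  · -- closure under pre-composition with isomorphisms
    rintro F ⟨hFv, hFe, hFc⟩ G H hGv hGiso hGj hcomp
    obtain ⟨hf, hfext, _⟩ := extMap_of_isEmb hstr htupM hFe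
    obtain ⟨_, hHi, hHj, hHc⟩ := hcomp
    have hHceq : H.c = G.c.map hf := hHc hf hfext
    have hGc : TupleIn (K.str F.i) G.c := by rw [← hGj]; exact hGv.2
    have hstep : ClSim (K.str F.i) G.c (K.str F.j) (G.c.map hf) :=
      ⟨hf, rfl, emb_restrict hfext.2 hGc⟩
    have hGe := hGiso.1
    unfold PotEmb.IsEmb at hGe
    rw [hGj] at hGe
    have hHe : H.IsEmb K := by
      unfold PotEmb.IsEmb
      rw [hHi, hHj, hHceq]
      exact clSim_trans hGe hstep
    refine ⟨⟨?_, ?_⟩, hHe, ?_⟩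
    · exact hHe.length_eq
    · rw [hHj, hHceq]
      exact tupleIn_map hfext.2 hGc
    · rw [hHj]
      exact hFc
  · -- closure under post-composition with isomorphisms
    rintro F ⟨hFv, hFe, hFc⟩ G H hGv hGiso hGi hcomp
    obtain ⟨hg, hgext, _⟩ := extMap_of_isEmb hstr htupM hGiso.1
    obtain ⟨_, hHi, hHj, hHc⟩ := hcomp
    have hHceq : H.c = F.c.map hg := hHc hg hgext
    have hgemb : IsEmbMap (K.str F.j) (K.str G.j) hg := by
      rw [← hGi]; exact hgext.2
    have hgmap : (K.tup F.j).map hg = G.c := by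
      have := hgext.1
      rw [hGi] at this
      exact this
    have hFcIn : TupleIn (K.str F.j) F.c := hFv.2
    have hstep : ClSim (K.str F.j) F.c (K.str G.j) (F.c.map hg) :=
      ⟨hg, rfl, emb_restrict hgemb hFcIn⟩
    have hHe : H.IsEmb K := by
      unfold PotEmb.IsEmb
      rw [hHi, hHj, hHceq]
      exact clSim_trans hFe hstep
    refine ⟨⟨?_, ?_⟩, hHe, ?_⟩
    · exact hHe.length_eq
    · rw [hHj, hHceq]
      exact tupleIn_map hgemb hFcIn
    · -- GoodCod for the new codomain index G.j
      rw [hHj]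
      obtain ⟨cs, hcsIn, haE⟩ := hFc
      set a' := K.tup F.j ++ cs with ha'
      have hcscl : ∀ x ∈ cs, InClosure M (K.tup F.j) x := (tupleIn_S_iff hstr).1 hcsIn
      have ha'cl : ∀ x ∈ a', InClosure M (K.tup F.j) x := by
        intro x hx
        rcases List.mem_append.1 hx with h | h
        · exact InClosure.base h (htupM F.j x h)
        · exact hcscl x h
      have ha'Sj : TupleIn (K.str F.j) a' := (tupleIn_S_iff hstr).2 ha'cl
      have hgM : IsEmbMap (K.str F.j) M hg := emb_S_M hstr hgemb
      have hb'M : TupleIn M (a'.map hg) := tupleIn_map hgM ha'Sj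
      have hclb : ClSim M a' M (a'.map hg) := by
        refine ⟨hg, rfl, ?_⟩
        have h2 := emb_restrict hgM ha'Sj
        rwa [S_sub hstr ha'cl] at h2
      have ha'M : TupleIn M a' := fun x hx => (ha'cl x hx).mem_dom
      have hb'E : a'.map hg ∈ E := hE.2.2.2 a' haE _ hb'M hclb
      have hb'eq : a'.map hg = G.c ++ cs.map hg := by
        rw [ha', List.map_append, hgmap]
      have hGcdom : TupleIn (K.str G.j) G.c := hGv.2
      have htupcl : ∀ x ∈ K.tup G.j, InClosure M (a'.map hg) x := by
        intro x hx
        have hx1 : x ∈ (K.str G.j).dom := K.tup_mem G.j x hx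
        have hx2 : InClosure (K.str G.j) G.c x := hGiso.2 x hx1
        have hGccl : ∀ y ∈ G.c, InClosure M (K.tup G.j) y := (tupleIn_S_iff hstr).1 hGcdom
        have hx3 : InClosure M G.c x := by
          rw [hstr G.j] at hx2
          exact (inClosure_sub_iff hGccl).1 hx2
        refine inClosure_trans ?_ hx3
        intro y hy
        rw [hb'eq]
        exact InClosure.base (List.mem_append_left _ hy) ((hGccl y hy).mem_dom)
      refine ⟨a'.map hg, ?_, hE.2.2.1 _ hb'E _ htupcl⟩
      rw [tupleIn_S_iff hstr, hb'eq]
      intro x hx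
      rcases List.mem_append.1 hx with h | h
      · exact (tupleIn_S_iff hstr).1 hGcdom x h
      · obtain ⟨y, hy, rfl⟩ := List.mem_map.1 h
        have : hg y ∈ (K.str G.j).dom := hgemb.1 y (hcsIn y hy)
        rw [hstr G.j] at this
        exact this
  · -- coverage
    intro i
    obtain ⟨bs, hbsE, hbscl⟩ := hE.2.1 (K.tup i) (htupM i)
    have htib : TupleIn M (K.tup i ++ bs) := by
      intro x hx
      rcases List.mem_append.1 hx with h | h
      · exact htupM i x h
      · exact hE.1 bs hbsE x h
    obtain ⟨j, _, hj⟩ := hdense (K.tup i ++ bs) htib 0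
    have hticl : ∀ x ∈ K.tup i, InClosure M (K.tup j) x := by
      intro x hx
      rw [hj]
      exact InClosure.base (List.mem_append_left _ hx) (htupM i x hx)
    refine ⟨⟨i, j, K.tup i⟩, ⟨⟨rfl, ?_⟩, ?_, ?_⟩, rfl⟩
    · exact (tupleIn_S_iff hstr).2 hticl
    · show ClSim (K.str i) (K.tup i) (K.str j) (K.tup i)
      rw [clSim_S_iff hstr (tup_self_cl htupM i) hticl]
      exact clSim_refl (htupM i)
    · exact ⟨[], fun x hx => absurd hx (by simp), by
        show (K.tup j ++ [] : List ℕ) ∈ E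
        rw [List.append_nil, hj]
        exact hE.2.2.1 bs hbsE (K.tup i) hbscl⟩

end Main3


section Main4

variable {L : Lang} {M : Str L} {K : CompAge L} {E : Set (List ℕ)} {s : Set ℕ}
variable (hstr : ∀ i, K.str i = M.sub (K.tup i))
variable (htupM : ∀ i, TupleIn M (K.tup i))
variable (hdense : ∀ as : List ℕ, TupleIn M as → ∀ n : ℕ, ∃ i, n ≤ i ∧ K.tup i = as)
variable (hE : IsCofinalCollection M E)
variable (hcu : CofUltraFunIn s M E)

theorem clSim_extend {a b c : List ℕ} (h : ClSim M a M b)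
    (hc : ∀ x ∈ c, InClosure M a x) :
    ∃ f, a.map f = b ∧ (∀ x ∈ c, InClosure M b (f x)) ∧
      ClSim M (a ++ c) M (b ++ c.map f) := by
  obtain ⟨f, hm, hiso⟩ := h
  have hbcl : ∀ x ∈ c, InClosure M b (f x) := fun x hx => hiso.1.1 x (hc x hx)
  refine ⟨f, hm, hbcl, f, by rw [List.map_append, hm], ?_⟩
  have hbcl' : ∀ y ∈ c.map f, InClosure M b y := by
    intro y hy
    obtain ⟨x, hx, rfl⟩ := List.mem_map.1 hy
    exact hbcl x hx
  rw [sub_append_eq hc, sub_append_eq hbcl']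
  exact hiso

include hstr in
theorem embCert_correct {G : PotEmb} {js : ℕ} {ds es : List ℕ}
    (hGv : G.Valid K)
    (hEI : EIcode G.j (K.tup G.j ++ G.c) js (ds ++ es) ∈ EmbedInfo K)
    (hlen : ds.length = (K.tup G.j).length) :
    PotEmb.Valid K ⟨G.j, js, ds⟩ ∧ PotEmb.IsEmb K ⟨G.j, js, ds⟩ ∧
      ∀ h : ℕ → ℕ, ExtMap K ⟨G.j, js, ds⟩ h → G.c.map h = es := by
  obtain ⟨hT1, hT2, hcl⟩ := EI_mem_iff.1 hEI
  obtain ⟨f, hm, hiso⟩ := hcl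
  rw [List.map_append] at hm
  obtain ⟨h1, h2⟩ := List.append_inj hm (by rw [List.length_map, hlen])
  have hGc_only : ∀ x ∈ G.c, InClosure M (K.tup G.j) x := (tupleIn_S_iff hstr).1 hGv.2
  have hGccl : ∀ x ∈ K.tup G.j ++ G.c, InClosure M (K.tup G.j) x := by
    intro x hx
    rcases List.mem_append.1 hx with h | h
    · exact (tupleIn_S_iff hstr).1 (K.tup_mem G.j) x h
    · exact hGc_only x h
  have hsubeq : (K.str G.j).sub (K.tup G.j ++ G.c) = K.str G.j := by
    rw [S_sub hstr hGccl, sub_append_eq hGc_only, ← hstr G.j]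
  rw [hsubeq] at hiso
  have hembf : IsEmbMap (K.str G.j) (K.str js) f := emb_of_emb_into_sub hiso.1
  refine ⟨⟨hlen, fun x hx => hT2 x (List.mem_append_left _ hx)⟩, ?_, ?_⟩
  · show ClSim (K.str G.j) (K.tup G.j) (K.str js) ds
    have hres := emb_restrict hembf (K.tup_mem G.j)
    rw [h1] at hres
    exact ⟨f, h1, hres⟩
  · intro h₀ hext
    have hgen : ∀ x ∈ (K.str G.j).dom, InClosure (K.str G.j) (K.tup G.j) x :=
      fun x hx => (K.gen G.j x).1 hx
    have huniq := emb_unique hext.2 hembf hgen (by rw [hext.1, h1])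
    rw [← h2]
    exact list_map_congr_on fun x hx => huniq x (hGv.2 x hx)

include hstr htupM hdense hE hcu in
theorem embCert_exists {F G₀ G₁ : PotEmb} (hFc : GoodCod K E F.j)
    (hG₀v : G₀.Valid K) (hG₁v : G₁.Valid K) (hi₀ : G₀.i = F.j) (hi₁ : G₁.i = F.j)
    (he₀ : G₀.IsEmb K) (he₁ : G₁.IsEmb K) :
    ∃ (js : ℕ) (ds₀ ds₁ es : List ℕ),
      EIcode G₀.j (K.tup G₀.j ++ G₀.c) js (ds₀ ++ es) ∈ EmbedInfo K ∧
      EIcode G₁.j (K.tup G₁.j ++ G₁.c) js (ds₁ ++ es) ∈ EmbedInfo K ∧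
      ds₀.length = (K.tup G₀.j).length ∧ ds₁.length = (K.tup G₁.j).length := by
  have build : ∀ G : PotEmb, G.Valid K → G.i = F.j → G.IsEmb K →
      ∃ g' : ℕ → ℕ, IsAutoOf M g' ∧ G.c.map g' = K.tup F.j := by
    intro G hGv hGi hGe
    have hGcl : ∀ x ∈ G.c, InClosure M (K.tup G.j) x := (tupleIn_S_iff hstr).1 hGv.2
    have hMcl : ClSim M (K.tup F.j) M G.c := by
      unfold PotEmb.IsEmb at hGe
      rw [hGi] at hGe
      exact (clSim_S_iff hstr (tup_self_cl htupM F.j) hGcl).1 hGe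
    obtain ⟨cs, hcsIn, haE⟩ := hFc
    have hcscl : ∀ x ∈ cs, InClosure M (K.tup F.j) x := (tupleIn_S_iff hstr).1 hcsIn
    obtain ⟨f, hfm, hfcl, hclbig⟩ := clSim_extend hMcl hcscl
    have hbM : TupleIn M (G.c ++ cs.map f) := by
      intro x hx
      rcases List.mem_append.1 hx with h | h
      · exact (hGcl x h).mem_dom
      · obtain ⟨y, hy, rfl⟩ := List.mem_map.1 h
        exact (hfcl y hy).mem_dom
    obtain ⟨g, hgauto, hgm⟩ := ultra_exists hE hcu _ haE _ hbM hclbig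
    rw [List.map_append] at hgm
    have hlen0 : ((K.tup F.j).map g).length = G.c.length := by
      rw [List.length_map, ← hfm, List.length_map]
    have hpre := (List.append_inj hgm hlen0).1
    obtain ⟨g', hg'iso, hgl, _⟩ := isoMap_inv hgauto
    refine ⟨g', hg'iso, ?_⟩
    rw [← hpre, List.map_map]
    exact list_map_id_on fun x hx => hgl x (htupM F.j x hx)
  obtain ⟨g₀', hg₀auto, hg₀map⟩ := build G₀ hG₀v hi₀ he₀
  obtain ⟨g₁', hg₁auto, hg₁map⟩ := build G₁ hG₁v hi₁ he₁
  have hds₀M : TupleIn M ((K.tup G₀.j).map g₀') := tupleIn_map hg₀auto.1 (htupM G₀.j)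
  have hds₁M : TupleIn M ((K.tup G₁.j).map g₁') := tupleIn_map hg₁auto.1 (htupM G₁.j)
  have hbig : TupleIn M ((K.tup G₀.j).map g₀' ++ (K.tup G₁.j).map g₁' ++ K.tup F.j) := by
    intro x hx
    rcases List.mem_append.1 hx with h | h
    · rcases List.mem_append.1 h with h' | h'
      · exact hds₀M x h'
      · exact hds₁M x h'
    · exact htupM F.j x h
  obtain ⟨js, _, hjs⟩ := hdense _ hbig 0
  have side : ∀ (G : PotEmb) (g' : ℕ → ℕ), IsAutoOf M g' → G.Valid K →
      G.c.map g' = K.tup F.j →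
      (∀ x ∈ (K.tup G.j).map g' ++ K.tup F.j, InClosure M (K.tup js) x) →
      EIcode G.j (K.tup G.j ++ G.c) js ((K.tup G.j).map g' ++ K.tup F.j) ∈
        EmbedInfo K := by
    intro G g' hg' hGv hmap hcl
    apply EI_mem_iff.2
    have hGc_only : ∀ x ∈ G.c, InClosure M (K.tup G.j) x := (tupleIn_S_iff hstr).1 hGv.2
    have hTcl : ∀ x ∈ K.tup G.j ++ G.c, InClosure M (K.tup G.j) x := by
      intro x hx
      rcases List.mem_append.1 hx with h | h
      · exact InClosure.base h (htupM G.j x h)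
      · exact hGc_only x h
    refine ⟨(tupleIn_S_iff hstr).2 hTcl, (tupleIn_S_iff hstr).2 hcl, ?_⟩
    rw [clSim_S_iff hstr hTcl hcl]
    have htM : TupleIn M (K.tup G.j ++ G.c) := fun x hx => (hTcl x hx).mem_dom
    have hres : ClSim M (K.tup G.j ++ G.c) M ((K.tup G.j ++ G.c).map g') :=
      ⟨g', rfl, emb_restrict hg'.1 htM⟩
    rw [List.map_append, hmap] at hres
    exact hres
  have hcl₀ : ∀ x ∈ (K.tup G₀.j).map g₀' ++ K.tup F.j, InClosure M (K.tup js) x := by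
    intro x hx
    rw [hjs]
    have hmem : x ∈ (K.tup G₀.j).map g₀' ++ (K.tup G₁.j).map g₁' ++ K.tup F.j := by
      rcases List.mem_append.1 hx with h | h
      · exact List.mem_append_left _ (List.mem_append_left _ h)
      · exact List.mem_append_right _ h
    exact InClosure.base hmem (hbig x hmem)
  have hcl₁ : ∀ x ∈ (K.tup G₁.j).map g₁' ++ K.tup F.j, InClosure M (K.tup js) x := by
    intro x hx
    rw [hjs]
    have hmem : x ∈ (K.tup G₀.j).map g₀' ++ (K.tup G₁.j).map g₁' ++ K.tup F.j := by
      rcases List.mem_append.1 hx with h | h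
      · exact List.mem_append_left _ (List.mem_append_right _ h)
      · exact List.mem_append_right _ h
    exact InClosure.base hmem (hbig x hmem)
  exact ⟨js, (K.tup G₀.j).map g₀', (K.tup G₁.j).map g₁', K.tup F.j,
    side G₀ g₀' hg₀auto hG₀v hg₀map hcl₀,
    side G₁ g₁' hg₁auto hG₁v hg₁map hcl₁,
    List.length_map _, List.length_map _⟩

include hstr in
theorem nonembCert_correct {G₀ G₁ : PotEmb} {js : ℕ} {ds₀ ds₁ : List ℕ}
    (hEI1 : EIcode G₀.j (K.tup G₀.j) js ds₀ ∈ EmbedInfo K)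
    (hEI2 : EIcode js ds₁ js ds₁ ∈ EmbedInfo K)
    (hlen : ds₁.length = (K.tup G₁.j).length) :
    PotEmb.Valid K ⟨G₀.j, js, ds₀⟩ ∧ PotEmb.IsEmb K ⟨G₀.j, js, ds₀⟩ ∧
      PotEmb.Valid K ⟨G₁.j, js, ds₁⟩ := by
  obtain ⟨_, hT, hcl⟩ := EI_mem_iff.1 hEI1
  obtain ⟨hT', _, _⟩ := EI_mem_iff.1 hEI2
  exact ⟨⟨hcl.length_eq, hT⟩, hcl, ⟨hlen, hT'⟩⟩

include hstr htupM hdense in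
theorem nonembCert_exists {G₀ G₁ : PotEmb} (hG₀v : G₀.Valid K) (hG₁v : G₁.Valid K) :
    ∃ (js : ℕ) (ds₀ ds₁ : List ℕ),
      EIcode G₀.j (K.tup G₀.j) js ds₀ ∈ EmbedInfo K ∧
      EIcode js ds₁ js ds₁ ∈ EmbedInfo K ∧ ds₁.length = (K.tup G₁.j).length := by
  have hbig : TupleIn M (K.tup G₀.j ++ K.tup G₁.j) := by
    intro x hx
    rcases List.mem_append.1 hx with h | h
    · exact htupM G₀.j x h
    · exact htupM G₁.j x h
  obtain ⟨js, _, hjs⟩ := hdense _ hbig 0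
  have hcl0 : ∀ x ∈ K.tup G₀.j, InClosure M (K.tup js) x := by
    intro x hx
    rw [hjs]
    exact InClosure.base (List.mem_append_left _ hx) (htupM G₀.j x hx)
  have hcl1 : ∀ x ∈ K.tup G₁.j, InClosure M (K.tup js) x := by
    intro x hx
    rw [hjs]
    exact InClosure.base (List.mem_append_right _ hx) (htupM G₁.j x hx)
  refine ⟨js, K.tup G₀.j, K.tup G₁.j, ?_, ?_, rfl⟩
  · apply EI_mem_iff.2
    refine ⟨K.tup_mem G₀.j, (tupleIn_S_iff hstr).2 hcl0, ?_⟩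
    rw [clSim_S_iff hstr (tup_self_cl htupM G₀.j) hcl0]
    exact clSim_refl (htupM G₀.j)
  · have hT : TupleIn (K.str js) (K.tup G₁.j) := (tupleIn_S_iff hstr).2 hcl1
    exact EI_mem_iff.2 ⟨hT, hT, clSim_refl hT⟩

include hstr in
theorem EItest_iff {G : PotEmb} (hGv : G.Valid K) :
    EIcode G.i (K.tup G.i) G.j G.c ∈ EmbedInfo K ↔ G.IsEmb K :=
  ⟨fun h => (EI_mem_iff.1 h).2.2, fun h => EI_mem_iff.2 ⟨K.tup_mem G.i, hGv.2, h⟩⟩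

end Main4


/-! ### Computability toolkit -/

section CompTool

variable {s : Set ℕ}

/-- Translation of oracle-free codes into oracle codes. -/
def toO : Nat.Partrec.Code → OCode
  | Nat.Partrec.Code.zero => OCode.zero
  | Nat.Partrec.Code.succ => OCode.succ
  | Nat.Partrec.Code.left => OCode.left
  | Nat.Partrec.Code.right => OCode.right
  | Nat.Partrec.Code.pair a b => OCode.pair (toO a) (toO b)
  | Nat.Partrec.Code.comp a b => OCode.comp (toO a) (toO b)
  | Nat.Partrec.Code.prec a b => OCode.prec (toO a) (toO b)
  | Nat.Partrec.Code.rfind' a => OCode.rfind' (toO a)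

theorem toO_eval (O : ℕ →. ℕ) :
    ∀ c : Nat.Partrec.Code, OCode.eval O (toO c) = Nat.Partrec.Code.eval c := by
  intro c
  induction c with
  | zero => rfl
  | succ => rfl
  | left => rfl
  | right => rfl
  | pair a b iha ihb =>
      simp only [toO, OCode.eval, Nat.Partrec.Code.eval, iha, ihb]
      rfl
  | comp a b iha ihb =>
      simp only [toO, OCode.eval, Nat.Partrec.Code.eval, iha, ihb]
      rfl
  | prec a b iha ihb =>
      simp only [toO, OCode.eval, Nat.Partrec.Code.eval, iha, ihb]
      rfl
  | rfind' a iha =>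
      simp only [toO, OCode.eval, Nat.Partrec.Code.eval, iha]
      rfl

theorem tc_of_computable {f : ℕ → ℕ} (hf : Computable f) (s : Set ℕ) :
    TotalComputableIn s f := by
  have h1 : Nat.Partrec (fun n => Part.some (f n)) := Partrec.nat_iff.1 hf
  obtain ⟨c, hc⟩ := Nat.Partrec.Code.exists_code.1 h1
  refine ⟨toO c, fun n => ?_⟩
  show OCode.eval (chi s) (toO c) n = Part.some (f n)
  rw [toO_eval, hc]

theorem tc_comp {f g : ℕ → ℕ} (hf : TotalComputableIn s f)
    (hg : TotalComputableIn s g) : TotalComputableIn s fun n => f (g n) := by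
  obtain ⟨cf, hcf⟩ := hf
  obtain ⟨cg, hcg⟩ := hg
  refine ⟨OCode.comp cf cg, fun n => ?_⟩
  show OCode.eval (chi s) cg n >>= OCode.eval (chi s) cf = _
  rw [hcg n]
  show (Part.some (g n)).bind (OCode.eval (chi s) cf) = _
  exact (Part.bind_some _ _).trans (hcf (g n))

theorem tc_pair {f g : ℕ → ℕ} (hf : TotalComputableIn s f)
    (hg : TotalComputableIn s g) :
    TotalComputableIn s fun n => Nat.pair (f n) (g n) := by
  obtain ⟨cf, hcf⟩ := hf
  obtain ⟨cg, hcg⟩ := hg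
  refine ⟨OCode.pair cf cg, fun n => ?_⟩
  show Nat.pair <$> OCode.eval (chi s) cf n <*> OCode.eval (chi s) cg n = _
  rw [hcf n, hcg n]
  simp [Seq.seq]

theorem tc_chi {A : Set ℕ} (h : SetRecIn s A) :
    TotalComputableIn s fun n => if n ∈ A then 1 else 0 := by
  obtain ⟨c, hc⟩ := h
  refine ⟨c, fun n => ?_⟩
  show OCode.eval (chi s) c n = _
  rw [hc]
  rfl

theorem tc_id : TotalComputableIn s fun n : ℕ => n :=
  tc_of_computable Computable.id s

theorem ocode_pair_eval {c₁ c₂ : OCode} {p a b : ℕ}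
    (h₁ : OCode.eval (chi s) c₁ p = Part.some a)
    (h₂ : OCode.eval (chi s) c₂ p = Part.some b) :
    OCode.eval (chi s) (OCode.pair c₁ c₂) p = Part.some (Nat.pair a b) := by
  show Nat.pair <$> OCode.eval (chi s) c₁ p <*> OCode.eval (chi s) c₂ p = _
  rw [h₁, h₂]
  simp [Seq.seq]

theorem tc_rfind {f : ℕ → ℕ} (hf : TotalComputableIn s f) :
    ∃ c : OCode, ∀ p : ℕ,
      OCode.eval (chi s) c p =
        Nat.rfind fun n => Part.some (decide (f (Nat.pair p n) = 0)) := by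
  obtain ⟨cf, hcf⟩ := hf
  obtain ⟨cid, hcid⟩ := tc_id (s := s)
  refine ⟨OCode.comp (OCode.rfind' cf)
    (OCode.pair cid OCode.zero), fun p => ?_⟩
  have hpair : OCode.eval (chi s) (OCode.pair cid OCode.zero) p =
      Part.some (Nat.pair p 0) := ocode_pair_eval (hcid p) rfl
  show OCode.eval (chi s) _ p >>= OCode.eval (chi s) (OCode.rfind' cf) = _
  rw [hpair]
  show (Part.some (Nat.pair p 0)).bind (OCode.eval (chi s) (OCode.rfind' cf)) = _
  refine (Part.bind_some _ _).trans ?_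
  simp only [OCode.eval, Nat.unpaired, Nat.unpair_pair]
  have heq : (Nat.rfind fun n =>
      (fun m => decide (m = 0)) <$> OCode.eval (chi s) cf (Nat.pair p (n + 0))) =
      Nat.rfind fun n => Part.some (decide (f (Nat.pair p n) = 0)) := by
    congr 1
    funext n
    rw [Nat.add_zero, hcf (Nat.pair p n)]
    rfl
  rw [heq]
  apply Part.map_id'
  intro x
  exact Nat.add_zero x

theorem tc_semidec {f : ℕ → ℕ} (hf : TotalComputableIn s f) :
    ∃ c : OCode, ∀ p : ℕ,
      (OCode.eval (chi s) c p).Dom ↔ ∃ n, f (Nat.pair p n) = 0 := by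
  obtain ⟨c, hc⟩ := tc_rfind hf
  refine ⟨c, fun p => ?_⟩
  rw [hc p]
  refine Iff.trans Nat.rfind_dom ?_
  constructor
  · rintro ⟨n, h1, _⟩
    exact ⟨n, by simpa using h1⟩
  · rintro ⟨n, h1⟩
    exact ⟨n, by simpa using h1, fun _ => trivial⟩

theorem tc_search {f g : ℕ → ℕ} (hf : TotalComputableIn s f)
    (hg : TotalComputableIn s g) :
    ∃ c : OCode, ∀ p n₀ : ℕ, f (Nat.pair p n₀) = 0 →
      ∃ n, f (Nat.pair p n) = 0 ∧
        OCode.eval (chi s) c p = Part.some (g (Nat.pair p n)) := by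
  obtain ⟨cr, hcr⟩ := tc_rfind hf
  obtain ⟨cg, hcg⟩ := hg
  obtain ⟨cid, hcid⟩ := tc_id (s := s)
  refine ⟨OCode.comp cg (OCode.pair cid cr),
    fun p n₀ h₀ => ?_⟩
  have hdom : (Nat.rfind fun n => Part.some (decide (f (Nat.pair p n) = 0))).Dom := by
    refine Nat.rfind_dom.2 ?_
    exact ⟨n₀, by simpa using h₀, fun _ => trivial⟩
  set n := (Nat.rfind fun n => Part.some (decide (f (Nat.pair p n) = 0))).get hdom with hn
  have hmem : n ∈ Nat.rfind fun n => Part.some (decide (f (Nat.pair p n) = 0)) :=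
    Part.get_mem hdom
  have hfn : f (Nat.pair p n) = 0 := by
    have := Nat.rfind_spec hmem
    simpa using this
  have hsome : (Nat.rfind fun n => Part.some (decide (f (Nat.pair p n) = 0))) =
      Part.some n := Part.eq_some_iff.2 hmem
  refine ⟨n, hfn, ?_⟩
  show OCode.eval (chi s) _ p >>= OCode.eval (chi s) cg = _
  have hpp : OCode.eval (chi s) (OCode.pair cid cr) p =
      Part.some (Nat.pair p n) := ocode_pair_eval (hcid p) (by rw [hcr p, hsome])
  rw [hpp]
  show (Part.some (Nat.pair p n)).bind (OCode.eval (chi s) cg) = _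
  exact (Part.bind_some _ _).trans (hcg _)

end CompTool


/-! ### Concrete search functions -/

section Checkers

variable {s : Set ℕ}

/-- Length of the list coded by `x`. -/
def lcode (x : ℕ) : ℕ := (Denumerable.ofNat (List ℕ) x).length

/-- Code of the concatenation of two coded lists. -/
def acode (x y : ℕ) : ℕ :=
  Encodable.encode (Denumerable.ofNat (List ℕ) x ++ Denumerable.ofNat (List ℕ) y)

theorem acode_encode (l l' : List ℕ) :
    acode (Encodable.encode l) (Encodable.encode l') = Encodable.encode (l ++ l') := by
  simp [acode, Denumerable.ofNat_encode]

theorem lcode_encode (l : List ℕ) : lcode (Encodable.encode l) = l.length := by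
  simp [lcode, Denumerable.ofNat_encode]

theorem primrec_lcode : Primrec lcode :=
  Primrec.list_length.comp (Primrec.ofNat (List ℕ))

theorem primrec_acode : Primrec₂ acode :=
  Primrec.encode.comp
    (Primrec.list_append.comp ((Primrec.ofNat (List ℕ)).comp Primrec.fst)
      ((Primrec.ofNat (List ℕ)).comp Primrec.snd))

theorem pr_u1 : Primrec fun n : ℕ => n.unpair.1 := Primrec.fst.comp Primrec.unpair

theorem pr_u2 : Primrec fun n : ℕ => n.unpair.2 := Primrec.snd.comp Primrec.unpair

theorem tc_of_eq {f g : ℕ → ℕ} (h : TotalComputableIn s g) (hfg : ∀ n, f n = g n) :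
    TotalComputableIn s f := by
  obtain ⟨c, hc⟩ := h
  exact ⟨c, fun n => by rw [show f n = g n from hfg n]; exact hc n⟩

/-- First packing stage: oracle values of `τ`. -/
def pack1 (τ : ℕ → ℕ) (m : ℕ) : ℕ :=
  Nat.pair m (Nat.pair (τ m.unpair.1.unpair.2.unpair.1.unpair.1)
    (Nat.pair (τ m.unpair.1.unpair.2.unpair.2.unpair.1)
      (Nat.pair (τ m.unpair.1.unpair.2.unpair.1.unpair.2.unpair.1)
        (τ m.unpair.1.unpair.2.unpair.2.unpair.2.unpair.1))))

/-- Second packing stage: oracle values of `χ`. -/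
def pack2 (χ : ℕ → ℕ) (z : ℕ) : ℕ :=
  Nat.pair z (Nat.pair
    (χ (Nat.pair z.unpair.1.unpair.1.unpair.2.unpair.1.unpair.1
      (Nat.pair z.unpair.2.unpair.1
        (Nat.pair z.unpair.1.unpair.1.unpair.2.unpair.1.unpair.2.unpair.1
          z.unpair.1.unpair.1.unpair.2.unpair.1.unpair.2.unpair.2))))
    (Nat.pair
    (χ (Nat.pair z.unpair.1.unpair.1.unpair.2.unpair.2.unpair.1
      (Nat.pair z.unpair.2.unpair.2.unpair.1
        (Nat.pair z.unpair.1.unpair.1.unpair.2.unpair.2.unpair.2.unpair.1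
          z.unpair.1.unpair.1.unpair.2.unpair.2.unpair.2.unpair.2))))
    (Nat.pair
    (χ (Nat.pair z.unpair.1.unpair.1.unpair.2.unpair.1.unpair.2.unpair.1
      (Nat.pair (acode z.unpair.2.unpair.2.unpair.2.unpair.1
          z.unpair.1.unpair.1.unpair.2.unpair.1.unpair.2.unpair.2)
        (Nat.pair z.unpair.1.unpair.2.unpair.1
          (acode z.unpair.1.unpair.2.unpair.2.unpair.1
            z.unpair.1.unpair.2.unpair.2.unpair.2.unpair.2)))))
    (Nat.pair
    (χ (Nat.pair z.unpair.1.unpair.1.unpair.2.unpair.2.unpair.2.unpair.1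
      (Nat.pair (acode z.unpair.2.unpair.2.unpair.2.unpair.2
          z.unpair.1.unpair.1.unpair.2.unpair.2.unpair.2.unpair.2)
        (Nat.pair z.unpair.1.unpair.2.unpair.1
          (acode z.unpair.1.unpair.2.unpair.2.unpair.2.unpair.1
            z.unpair.1.unpair.2.unpair.2.unpair.2.unpair.2)))))
    (Nat.pair
    (χ (Nat.pair z.unpair.1.unpair.1.unpair.2.unpair.1.unpair.2.unpair.1
      (Nat.pair z.unpair.2.unpair.2.unpair.2.unpair.1
        (Nat.pair z.unpair.1.unpair.2.unpair.1 z.unpair.1.unpair.2.unpair.2.unpair.1))))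
    (χ (Nat.pair z.unpair.1.unpair.2.unpair.1
      (Nat.pair z.unpair.1.unpair.2.unpair.2.unpair.2.unpair.1
        (Nat.pair z.unpair.1.unpair.2.unpair.1
          z.unpair.1.unpair.2.unpair.2.unpair.2.unpair.1)))))))))

/-- Final decision stage. -/
def final6 (y : ℕ) : ℕ :=
  if y.unpair.2.unpair.1 = 1 ∧ y.unpair.2.unpair.2.unpair.1 = 1 then
    if y.unpair.2.unpair.2.unpair.2.unpair.1 = 1 ∧
        y.unpair.2.unpair.2.unpair.2.unpair.2.unpair.1 = 1 ∧
        lcode y.unpair.1.unpair.1.unpair.2.unpair.2.unpair.1 =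
          lcode y.unpair.1.unpair.2.unpair.2.unpair.2.unpair.1 ∧
        lcode y.unpair.1.unpair.1.unpair.2.unpair.2.unpair.2.unpair.1 =
          lcode y.unpair.1.unpair.2.unpair.2.unpair.2.unpair.2 then 0 else 1
  else
    if y.unpair.2.unpair.2.unpair.2.unpair.2.unpair.2.unpair.1 = 1 ∧
        y.unpair.2.unpair.2.unpair.2.unpair.2.unpair.2.unpair.2 = 1 ∧
        lcode y.unpair.1.unpair.1.unpair.2.unpair.2.unpair.2.unpair.1 =
          lcode y.unpair.1.unpair.2.unpair.2.unpair.2.unpair.2 then 0 else 1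

/-- The search predicate for the amalgamation function. -/
def check6 (χ τ : ℕ → ℕ) (m : ℕ) : ℕ := final6 (pack2 χ (pack1 τ m))

/-- The output function for the amalgamation function. -/
def out6 (m : ℕ) : ℕ :=
  Nat.pair
    (Nat.pair m.unpair.1.unpair.2.unpair.1.unpair.2.unpair.1
      (Nat.pair m.unpair.2.unpair.1 m.unpair.2.unpair.2.unpair.1))
    (Nat.pair m.unpair.1.unpair.2.unpair.2.unpair.2.unpair.1
      (Nat.pair m.unpair.2.unpair.1 m.unpair.2.unpair.2.unpair.2.unpair.1))

end Checkers

section Checkers2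

variable {s : Set ℕ}

def pack5 (τ : ℕ → ℕ) (m : ℕ) : ℕ :=
  Nat.pair m (Nat.pair (τ m.unpair.1.unpair.1) (τ m.unpair.1.unpair.2.unpair.1))

def pack5b (χEI χE : ℕ → ℕ) (z : ℕ) : ℕ :=
  Nat.pair
    (χEI (Nat.pair z.unpair.1.unpair.1.unpair.1
      (Nat.pair z.unpair.2.unpair.1
        (Nat.pair z.unpair.1.unpair.1.unpair.2.unpair.1
          z.unpair.1.unpair.1.unpair.2.unpair.2))))
    (Nat.pair
      (χEI (Nat.pair z.unpair.1.unpair.1.unpair.2.unpair.1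
        (Nat.pair z.unpair.1.unpair.2
          (Nat.pair z.unpair.1.unpair.1.unpair.2.unpair.1 z.unpair.1.unpair.2))))
      (χE (acode z.unpair.2.unpair.2 z.unpair.1.unpair.2)))

def final5 (y : ℕ) : ℕ :=
  if y.unpair.1 = 1 ∧ y.unpair.2.unpair.1 = 1 ∧ y.unpair.2.unpair.2 = 1 then 0 else 1

def check5 (χEI χE τ : ℕ → ℕ) (m : ℕ) : ℕ := final5 (pack5b χEI χE (pack5 τ m))

theorem check6_spec (χ τ : ℕ → ℕ) (fc i0 j0 c0 i1 j1 c1 js e0 e1 e2 : ℕ) :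
    check6 χ τ (Nat.pair (Nat.pair fc
        (Nat.pair (Nat.pair i0 (Nat.pair j0 c0)) (Nat.pair i1 (Nat.pair j1 c1))))
        (Nat.pair js (Nat.pair e0 (Nat.pair e1 e2)))) =
      if χ (Nat.pair i0 (Nat.pair (τ i0) (Nat.pair j0 c0))) = 1 ∧
         χ (Nat.pair i1 (Nat.pair (τ i1) (Nat.pair j1 c1))) = 1 then
        if χ (Nat.pair j0 (Nat.pair (acode (τ j0) c0) (Nat.pair js (acode e0 e2)))) = 1 ∧
           χ (Nat.pair j1 (Nat.pair (acode (τ j1) c1) (Nat.pair js (acode e1 e2)))) = 1 ∧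
           lcode e0 = lcode (τ j0) ∧ lcode e1 = lcode (τ j1) then 0 else 1
      else
        if χ (Nat.pair j0 (Nat.pair (τ j0) (Nat.pair js e0))) = 1 ∧
           χ (Nat.pair js (Nat.pair e1 (Nat.pair js e1))) = 1 ∧
           lcode e1 = lcode (τ j1) then 0 else 1 := by
  simp only [check6, pack1, pack2, final6, Nat.unpair_pair]

theorem out6_spec (fc i0 j0 c0 i1 j1 c1 js e0 e1 e2 : ℕ) :
    out6 (Nat.pair (Nat.pair fc
        (Nat.pair (Nat.pair i0 (Nat.pair j0 c0)) (Nat.pair i1 (Nat.pair j1 c1))))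
        (Nat.pair js (Nat.pair e0 (Nat.pair e1 e2)))) =
      Nat.pair (Nat.pair j0 (Nat.pair js e0)) (Nat.pair j1 (Nat.pair js e1)) := by
  simp only [out6, Nat.unpair_pair]

theorem check5_spec (χEI χE τ : ℕ → ℕ) (i j e n : ℕ) :
    check5 χEI χE τ (Nat.pair (Nat.pair i (Nat.pair j e)) n) =
      if χEI (Nat.pair i (Nat.pair (τ i) (Nat.pair j e))) = 1 ∧
         χEI (Nat.pair j (Nat.pair n (Nat.pair j n))) = 1 ∧
         χE (acode (τ j) n) = 1 then 0 else 1 := by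
  simp only [check5, pack5, pack5b, final5, Nat.unpair_pair]

theorem pack2_b1 : Computable fun z : ℕ => Nat.pair (z.unpair.1.unpair.1.unpair.2.unpair.1.unpair.1) (Nat.pair (z.unpair.2.unpair.1) (Nat.pair (z.unpair.1.unpair.1.unpair.2.unpair.1.unpair.2.unpair.1) (z.unpair.1.unpair.1.unpair.2.unpair.1.unpair.2.unpair.2))) := by
  have h1 : Primrec fun z : ℕ => z.unpair.1 := pr_u1.comp Primrec.id
  have h2 : Primrec fun z : ℕ => z.unpair.1.unpair.1 := pr_u1.comp h1
  have h3 : Primrec fun z : ℕ => z.unpair.1.unpair.1.unpair.2 := pr_u2.comp h2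
  have h4 : Primrec fun z : ℕ => z.unpair.1.unpair.1.unpair.2.unpair.1 := pr_u1.comp h3
  have h5 : Primrec fun z : ℕ => z.unpair.1.unpair.1.unpair.2.unpair.1.unpair.1 := pr_u1.comp h4
  have h6 : Primrec fun z : ℕ => z.unpair.2 := pr_u2.comp Primrec.id
  have h7 : Primrec fun z : ℕ => z.unpair.2.unpair.1 := pr_u1.comp h6
  have h8 : Primrec fun z : ℕ => z.unpair.1.unpair.1.unpair.2.unpair.1.unpair.2 := pr_u2.comp h4
  have h9 : Primrec fun z : ℕ => z.unpair.1.unpair.1.unpair.2.unpair.1.unpair.2.unpair.1 := pr_u1.comp h8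
  have h10 : Primrec fun z : ℕ => z.unpair.1.unpair.1.unpair.2.unpair.1.unpair.2.unpair.2 := pr_u2.comp h8
  have h11 : Primrec fun z : ℕ => Nat.pair (z.unpair.1.unpair.1.unpair.2.unpair.1.unpair.2.unpair.1) (z.unpair.1.unpair.1.unpair.2.unpair.1.unpair.2.unpair.2) := Primrec₂.natPair.comp h9 h10
  have h12 : Primrec fun z : ℕ => Nat.pair (z.unpair.2.unpair.1) (Nat.pair (z.unpair.1.unpair.1.unpair.2.unpair.1.unpair.2.unpair.1) (z.unpair.1.unpair.1.unpair.2.unpair.1.unpair.2.unpair.2)) := Primrec₂.natPair.comp h7 h11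
  have h13 : Primrec fun z : ℕ => Nat.pair (z.unpair.1.unpair.1.unpair.2.unpair.1.unpair.1) (Nat.pair (z.unpair.2.unpair.1) (Nat.pair (z.unpair.1.unpair.1.unpair.2.unpair.1.unpair.2.unpair.1) (z.unpair.1.unpair.1.unpair.2.unpair.1.unpair.2.unpair.2))) := Primrec₂.natPair.comp h5 h12
  exact h13.to_comp

theorem pack2_b2 : Computable fun z : ℕ => Nat.pair (z.unpair.1.unpair.1.unpair.2.unpair.2.unpair.1) (Nat.pair (z.unpair.2.unpair.2.unpair.1) (Nat.pair (z.unpair.1.unpair.1.unpair.2.unpair.2.unpair.2.unpair.1) (z.unpair.1.unpair.1.unpair.2.unpair.2.unpair.2.unpair.2))) := by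
  have h1 : Primrec fun z : ℕ => z.unpair.1 := pr_u1.comp Primrec.id
  have h2 : Primrec fun z : ℕ => z.unpair.1.unpair.1 := pr_u1.comp h1
  have h3 : Primrec fun z : ℕ => z.unpair.1.unpair.1.unpair.2 := pr_u2.comp h2
  have h4 : Primrec fun z : ℕ => z.unpair.1.unpair.1.unpair.2.unpair.2 := pr_u2.comp h3
  have h5 : Primrec fun z : ℕ => z.unpair.1.unpair.1.unpair.2.unpair.2.unpair.1 := pr_u1.comp h4
  have h6 : Primrec fun z : ℕ => z.unpair.2 := pr_u2.comp Primrec.id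
  have h7 : Primrec fun z : ℕ => z.unpair.2.unpair.2 := pr_u2.comp h6
  have h8 : Primrec fun z : ℕ => z.unpair.2.unpair.2.unpair.1 := pr_u1.comp h7
  have h9 : Primrec fun z : ℕ => z.unpair.1.unpair.1.unpair.2.unpair.2.unpair.2 := pr_u2.comp h4
  have h10 : Primrec fun z : ℕ => z.unpair.1.unpair.1.unpair.2.unpair.2.unpair.2.unpair.1 := pr_u1.comp h9
  have h11 : Primrec fun z : ℕ => z.unpair.1.unpair.1.unpair.2.unpair.2.unpair.2.unpair.2 := pr_u2.comp h9
  have h12 : Primrec fun z : ℕ => Nat.pair (z.unpair.1.unpair.1.unpair.2.unpair.2.unpair.2.unpair.1) (z.unpair.1.unpair.1.unpair.2.unpair.2.unpair.2.unpair.2) := Primrec₂.natPair.comp h10 h11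
  have h13 : Primrec fun z : ℕ => Nat.pair (z.unpair.2.unpair.2.unpair.1) (Nat.pair (z.unpair.1.unpair.1.unpair.2.unpair.2.unpair.2.unpair.1) (z.unpair.1.unpair.1.unpair.2.unpair.2.unpair.2.unpair.2)) := Primrec₂.natPair.comp h8 h12
  have h14 : Primrec fun z : ℕ => Nat.pair (z.unpair.1.unpair.1.unpair.2.unpair.2.unpair.1) (Nat.pair (z.unpair.2.unpair.2.unpair.1) (Nat.pair (z.unpair.1.unpair.1.unpair.2.unpair.2.unpair.2.unpair.1) (z.unpair.1.unpair.1.unpair.2.unpair.2.unpair.2.unpair.2))) := Primrec₂.natPair.comp h5 h13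
  exact h14.to_comp

theorem pack2_b3 : Computable fun z : ℕ => Nat.pair (z.unpair.1.unpair.1.unpair.2.unpair.1.unpair.2.unpair.1) (Nat.pair (acode (z.unpair.2.unpair.2.unpair.2.unpair.1) (z.unpair.1.unpair.1.unpair.2.unpair.1.unpair.2.unpair.2)) (Nat.pair (z.unpair.1.unpair.2.unpair.1) (acode (z.unpair.1.unpair.2.unpair.2.unpair.1) (z.unpair.1.unpair.2.unpair.2.unpair.2.unpair.2)))) := by
  have h1 : Primrec fun z : ℕ => z.unpair.1 := pr_u1.comp Primrec.id
  have h2 : Primrec fun z : ℕ => z.unpair.1.unpair.1 := pr_u1.comp h1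
  have h3 : Primrec fun z : ℕ => z.unpair.1.unpair.1.unpair.2 := pr_u2.comp h2
  have h4 : Primrec fun z : ℕ => z.unpair.1.unpair.1.unpair.2.unpair.1 := pr_u1.comp h3
  have h5 : Primrec fun z : ℕ => z.unpair.1.unpair.1.unpair.2.unpair.1.unpair.2 := pr_u2.comp h4
  have h6 : Primrec fun z : ℕ => z.unpair.1.unpair.1.unpair.2.unpair.1.unpair.2.unpair.1 := pr_u1.comp h5
  have h7 : Primrec fun z : ℕ => z.unpair.2 := pr_u2.comp Primrec.id
  have h8 : Primrec fun z : ℕ => z.unpair.2.unpair.2 := pr_u2.comp h7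
  have h9 : Primrec fun z : ℕ => z.unpair.2.unpair.2.unpair.2 := pr_u2.comp h8
  have h10 : Primrec fun z : ℕ => z.unpair.2.unpair.2.unpair.2.unpair.1 := pr_u1.comp h9
  have h11 : Primrec fun z : ℕ => z.unpair.1.unpair.1.unpair.2.unpair.1.unpair.2.unpair.2 := pr_u2.comp h5
  have h12 : Primrec fun z : ℕ => acode (z.unpair.2.unpair.2.unpair.2.unpair.1) (z.unpair.1.unpair.1.unpair.2.unpair.1.unpair.2.unpair.2) := primrec_acode.comp h10 h11
  have h13 : Primrec fun z : ℕ => z.unpair.1.unpair.2 := pr_u2.comp h1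
  have h14 : Primrec fun z : ℕ => z.unpair.1.unpair.2.unpair.1 := pr_u1.comp h13
  have h15 : Primrec fun z : ℕ => z.unpair.1.unpair.2.unpair.2 := pr_u2.comp h13
  have h16 : Primrec fun z : ℕ => z.unpair.1.unpair.2.unpair.2.unpair.1 := pr_u1.comp h15
  have h17 : Primrec fun z : ℕ => z.unpair.1.unpair.2.unpair.2.unpair.2 := pr_u2.comp h15
  have h18 : Primrec fun z : ℕ => z.unpair.1.unpair.2.unpair.2.unpair.2.unpair.2 := pr_u2.comp h17
  have h19 : Primrec fun z : ℕ => acode (z.unpair.1.unpair.2.unpair.2.unpair.1) (z.unpair.1.unpair.2.unpair.2.unpair.2.unpair.2) := primrec_acode.comp h16 h18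
  have h20 : Primrec fun z : ℕ => Nat.pair (z.unpair.1.unpair.2.unpair.1) (acode (z.unpair.1.unpair.2.unpair.2.unpair.1) (z.unpair.1.unpair.2.unpair.2.unpair.2.unpair.2)) := Primrec₂.natPair.comp h14 h19
  have h21 : Primrec fun z : ℕ => Nat.pair (acode (z.unpair.2.unpair.2.unpair.2.unpair.1) (z.unpair.1.unpair.1.unpair.2.unpair.1.unpair.2.unpair.2)) (Nat.pair (z.unpair.1.unpair.2.unpair.1) (acode (z.unpair.1.unpair.2.unpair.2.unpair.1) (z.unpair.1.unpair.2.unpair.2.unpair.2.unpair.2))) := Primrec₂.natPair.comp h12 h20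
  have h22 : Primrec fun z : ℕ => Nat.pair (z.unpair.1.unpair.1.unpair.2.unpair.1.unpair.2.unpair.1) (Nat.pair (acode (z.unpair.2.unpair.2.unpair.2.unpair.1) (z.unpair.1.unpair.1.unpair.2.unpair.1.unpair.2.unpair.2)) (Nat.pair (z.unpair.1.unpair.2.unpair.1) (acode (z.unpair.1.unpair.2.unpair.2.unpair.1) (z.unpair.1.unpair.2.unpair.2.unpair.2.unpair.2)))) := Primrec₂.natPair.comp h6 h21
  exact h22.to_comp

theorem pack2_b4 : Computable fun z : ℕ => Nat.pair (z.unpair.1.unpair.1.unpair.2.unpair.2.unpair.2.unpair.1) (Nat.pair (acode (z.unpair.2.unpair.2.unpair.2.unpair.2) (z.unpair.1.unpair.1.unpair.2.unpair.2.unpair.2.unpair.2)) (Nat.pair (z.unpair.1.unpair.2.unpair.1) (acode (z.unpair.1.unpair.2.unpair.2.unpair.2.unpair.1) (z.unpair.1.unpair.2.unpair.2.unpair.2.unpair.2)))) := by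
  have h1 : Primrec fun z : ℕ => z.unpair.1 := pr_u1.comp Primrec.id
  have h2 : Primrec fun z : ℕ => z.unpair.1.unpair.1 := pr_u1.comp h1
  have h3 : Primrec fun z : ℕ => z.unpair.1.unpair.1.unpair.2 := pr_u2.comp h2
  have h4 : Primrec fun z : ℕ => z.unpair.1.unpair.1.unpair.2.unpair.2 := pr_u2.comp h3
  have h5 : Primrec fun z : ℕ => z.unpair.1.unpair.1.unpair.2.unpair.2.unpair.2 := pr_u2.comp h4
  have h6 : Primrec fun z : ℕ => z.unpair.1.unpair.1.unpair.2.unpair.2.unpair.2.unpair.1 := pr_u1.comp h5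
  have h7 : Primrec fun z : ℕ => z.unpair.2 := pr_u2.comp Primrec.id
  have h8 : Primrec fun z : ℕ => z.unpair.2.unpair.2 := pr_u2.comp h7
  have h9 : Primrec fun z : ℕ => z.unpair.2.unpair.2.unpair.2 := pr_u2.comp h8
  have h10 : Primrec fun z : ℕ => z.unpair.2.unpair.2.unpair.2.unpair.2 := pr_u2.comp h9
  have h11 : Primrec fun z : ℕ => z.unpair.1.unpair.1.unpair.2.unpair.2.unpair.2.unpair.2 := pr_u2.comp h5
  have h12 : Primrec fun z : ℕ => acode (z.unpair.2.unpair.2.unpair.2.unpair.2) (z.unpair.1.unpair.1.unpair.2.unpair.2.unpair.2.unpair.2) := primrec_acode.comp h10 h11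
  have h13 : Primrec fun z : ℕ => z.unpair.1.unpair.2 := pr_u2.comp h1
  have h14 : Primrec fun z : ℕ => z.unpair.1.unpair.2.unpair.1 := pr_u1.comp h13
  have h15 : Primrec fun z : ℕ => z.unpair.1.unpair.2.unpair.2 := pr_u2.comp h13
  have h16 : Primrec fun z : ℕ => z.unpair.1.unpair.2.unpair.2.unpair.2 := pr_u2.comp h15
  have h17 : Primrec fun z : ℕ => z.unpair.1.unpair.2.unpair.2.unpair.2.unpair.1 := pr_u1.comp h16
  have h18 : Primrec fun z : ℕ => z.unpair.1.unpair.2.unpair.2.unpair.2.unpair.2 := pr_u2.comp h16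
  have h19 : Primrec fun z : ℕ => acode (z.unpair.1.unpair.2.unpair.2.unpair.2.unpair.1) (z.unpair.1.unpair.2.unpair.2.unpair.2.unpair.2) := primrec_acode.comp h17 h18
  have h20 : Primrec fun z : ℕ => Nat.pair (z.unpair.1.unpair.2.unpair.1) (acode (z.unpair.1.unpair.2.unpair.2.unpair.2.unpair.1) (z.unpair.1.unpair.2.unpair.2.unpair.2.unpair.2)) := Primrec₂.natPair.comp h14 h19
  have h21 : Primrec fun z : ℕ => Nat.pair (acode (z.unpair.2.unpair.2.unpair.2.unpair.2) (z.unpair.1.unpair.1.unpair.2.unpair.2.unpair.2.unpair.2)) (Nat.pair (z.unpair.1.unpair.2.unpair.1) (acode (z.unpair.1.unpair.2.unpair.2.unpair.2.unpair.1) (z.unpair.1.unpair.2.unpair.2.unpair.2.unpair.2))) := Primrec₂.natPair.comp h12 h20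
  have h22 : Primrec fun z : ℕ => Nat.pair (z.unpair.1.unpair.1.unpair.2.unpair.2.unpair.2.unpair.1) (Nat.pair (acode (z.unpair.2.unpair.2.unpair.2.unpair.2) (z.unpair.1.unpair.1.unpair.2.unpair.2.unpair.2.unpair.2)) (Nat.pair (z.unpair.1.unpair.2.unpair.1) (acode (z.unpair.1.unpair.2.unpair.2.unpair.2.unpair.1) (z.unpair.1.unpair.2.unpair.2.unpair.2.unpair.2)))) := Primrec₂.natPair.comp h6 h21
  exact h22.to_comp

theorem pack2_b5 : Computable fun z : ℕ => Nat.pair (z.unpair.1.unpair.1.unpair.2.unpair.1.unpair.2.unpair.1) (Nat.pair (z.unpair.2.unpair.2.unpair.2.unpair.1) (Nat.pair (z.unpair.1.unpair.2.unpair.1) (z.unpair.1.unpair.2.unpair.2.unpair.1))) := by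
  have h1 : Primrec fun z : ℕ => z.unpair.1 := pr_u1.comp Primrec.id
  have h2 : Primrec fun z : ℕ => z.unpair.1.unpair.1 := pr_u1.comp h1
  have h3 : Primrec fun z : ℕ => z.unpair.1.unpair.1.unpair.2 := pr_u2.comp h2
  have h4 : Primrec fun z : ℕ => z.unpair.1.unpair.1.unpair.2.unpair.1 := pr_u1.comp h3
  have h5 : Primrec fun z : ℕ => z.unpair.1.unpair.1.unpair.2.unpair.1.unpair.2 := pr_u2.comp h4
  have h6 : Primrec fun z : ℕ => z.unpair.1.unpair.1.unpair.2.unpair.1.unpair.2.unpair.1 := pr_u1.comp h5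
  have h7 : Primrec fun z : ℕ => z.unpair.2 := pr_u2.comp Primrec.id
  have h8 : Primrec fun z : ℕ => z.unpair.2.unpair.2 := pr_u2.comp h7
  have h9 : Primrec fun z : ℕ => z.unpair.2.unpair.2.unpair.2 := pr_u2.comp h8
  have h10 : Primrec fun z : ℕ => z.unpair.2.unpair.2.unpair.2.unpair.1 := pr_u1.comp h9
  have h11 : Primrec fun z : ℕ => z.unpair.1.unpair.2 := pr_u2.comp h1
  have h12 : Primrec fun z : ℕ => z.unpair.1.unpair.2.unpair.1 := pr_u1.comp h11
  have h13 : Primrec fun z : ℕ => z.unpair.1.unpair.2.unpair.2 := pr_u2.comp h11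
  have h14 : Primrec fun z : ℕ => z.unpair.1.unpair.2.unpair.2.unpair.1 := pr_u1.comp h13
  have h15 : Primrec fun z : ℕ => Nat.pair (z.unpair.1.unpair.2.unpair.1) (z.unpair.1.unpair.2.unpair.2.unpair.1) := Primrec₂.natPair.comp h12 h14
  have h16 : Primrec fun z : ℕ => Nat.pair (z.unpair.2.unpair.2.unpair.2.unpair.1) (Nat.pair (z.unpair.1.unpair.2.unpair.1) (z.unpair.1.unpair.2.unpair.2.unpair.1)) := Primrec₂.natPair.comp h10 h15
  have h17 : Primrec fun z : ℕ => Nat.pair (z.unpair.1.unpair.1.unpair.2.unpair.1.unpair.2.unpair.1) (Nat.pair (z.unpair.2.unpair.2.unpair.2.unpair.1) (Nat.pair (z.unpair.1.unpair.2.unpair.1) (z.unpair.1.unpair.2.unpair.2.unpair.1))) := Primrec₂.natPair.comp h6 h16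
  exact h17.to_comp

theorem pack2_b6 : Computable fun z : ℕ => Nat.pair (z.unpair.1.unpair.2.unpair.1) (Nat.pair (z.unpair.1.unpair.2.unpair.2.unpair.2.unpair.1) (Nat.pair (z.unpair.1.unpair.2.unpair.1) (z.unpair.1.unpair.2.unpair.2.unpair.2.unpair.1))) := by
  have h1 : Primrec fun z : ℕ => z.unpair.1 := pr_u1.comp Primrec.id
  have h2 : Primrec fun z : ℕ => z.unpair.1.unpair.2 := pr_u2.comp h1
  have h3 : Primrec fun z : ℕ => z.unpair.1.unpair.2.unpair.1 := pr_u1.comp h2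
  have h4 : Primrec fun z : ℕ => z.unpair.1.unpair.2.unpair.2 := pr_u2.comp h2
  have h5 : Primrec fun z : ℕ => z.unpair.1.unpair.2.unpair.2.unpair.2 := pr_u2.comp h4
  have h6 : Primrec fun z : ℕ => z.unpair.1.unpair.2.unpair.2.unpair.2.unpair.1 := pr_u1.comp h5
  have h7 : Primrec fun z : ℕ => Nat.pair (z.unpair.1.unpair.2.unpair.1) (z.unpair.1.unpair.2.unpair.2.unpair.2.unpair.1) := Primrec₂.natPair.comp h3 h6
  have h8 : Primrec fun z : ℕ => Nat.pair (z.unpair.1.unpair.2.unpair.2.unpair.2.unpair.1) (Nat.pair (z.unpair.1.unpair.2.unpair.1) (z.unpair.1.unpair.2.unpair.2.unpair.2.unpair.1)) := Primrec₂.natPair.comp h6 h7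
  have h9 : Primrec fun z : ℕ => Nat.pair (z.unpair.1.unpair.2.unpair.1) (Nat.pair (z.unpair.1.unpair.2.unpair.2.unpair.2.unpair.1) (Nat.pair (z.unpair.1.unpair.2.unpair.1) (z.unpair.1.unpair.2.unpair.2.unpair.2.unpair.1))) := Primrec₂.natPair.comp h3 h8
  exact h9.to_comp

theorem computable_final6 : Computable final6 := by
  have h1 : Primrec fun y : ℕ => y.unpair.2 := pr_u2.comp Primrec.id
  have h2 : Primrec fun y : ℕ => y.unpair.2.unpair.1 := pr_u1.comp h1
  have h3 : Primrec fun y : ℕ => y.unpair.2.unpair.2 := pr_u2.comp h1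
  have h4 : Primrec fun y : ℕ => y.unpair.2.unpair.2.unpair.1 := pr_u1.comp h3
  have h5 : Primrec fun y : ℕ => y.unpair.2.unpair.2.unpair.2 := pr_u2.comp h3
  have h6 : Primrec fun y : ℕ => y.unpair.2.unpair.2.unpair.2.unpair.1 := pr_u1.comp h5
  have h7 : Primrec fun y : ℕ => y.unpair.2.unpair.2.unpair.2.unpair.2 := pr_u2.comp h5
  have h8 : Primrec fun y : ℕ => y.unpair.2.unpair.2.unpair.2.unpair.2.unpair.1 := pr_u1.comp h7
  have h9 : Primrec fun y : ℕ => y.unpair.2.unpair.2.unpair.2.unpair.2.unpair.2 := pr_u2.comp h7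
  have h10 : Primrec fun y : ℕ => y.unpair.2.unpair.2.unpair.2.unpair.2.unpair.2.unpair.1 := pr_u1.comp h9
  have h11 : Primrec fun y : ℕ => y.unpair.2.unpair.2.unpair.2.unpair.2.unpair.2.unpair.2 := pr_u2.comp h9
  have h12 : Primrec fun y : ℕ => y.unpair.1 := pr_u1.comp Primrec.id
  have h13 : Primrec fun y : ℕ => y.unpair.1.unpair.1 := pr_u1.comp h12
  have h14 : Primrec fun y : ℕ => y.unpair.1.unpair.1.unpair.2 := pr_u2.comp h13
  have h15 : Primrec fun y : ℕ => y.unpair.1.unpair.1.unpair.2.unpair.2 := pr_u2.comp h14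
  have h16 : Primrec fun y : ℕ => y.unpair.1.unpair.1.unpair.2.unpair.2.unpair.1 := pr_u1.comp h15
  have h17 : Primrec fun y : ℕ => lcode (y.unpair.1.unpair.1.unpair.2.unpair.2.unpair.1) := primrec_lcode.comp h16
  have h18 : Primrec fun y : ℕ => y.unpair.1.unpair.1.unpair.2.unpair.2.unpair.2 := pr_u2.comp h15
  have h19 : Primrec fun y : ℕ => y.unpair.1.unpair.1.unpair.2.unpair.2.unpair.2.unpair.1 := pr_u1.comp h18
  have h20 : Primrec fun y : ℕ => lcode (y.unpair.1.unpair.1.unpair.2.unpair.2.unpair.2.unpair.1) := primrec_lcode.comp h19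
  have h21 : Primrec fun y : ℕ => y.unpair.1.unpair.2 := pr_u2.comp h12
  have h22 : Primrec fun y : ℕ => y.unpair.1.unpair.2.unpair.2 := pr_u2.comp h21
  have h23 : Primrec fun y : ℕ => y.unpair.1.unpair.2.unpair.2.unpair.2 := pr_u2.comp h22
  have h24 : Primrec fun y : ℕ => y.unpair.1.unpair.2.unpair.2.unpair.2.unpair.1 := pr_u1.comp h23
  have h25 : Primrec fun y : ℕ => lcode (y.unpair.1.unpair.2.unpair.2.unpair.2.unpair.1) := primrec_lcode.comp h24
  have h26 : Primrec fun y : ℕ => y.unpair.1.unpair.2.unpair.2.unpair.2.unpair.2 := pr_u2.comp h23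
  have h27 : Primrec fun y : ℕ => lcode (y.unpair.1.unpair.2.unpair.2.unpair.2.unpair.2) := primrec_lcode.comp h26
  have h28 : Primrec fun _ : ℕ => 1 := Primrec.const 1
  have heq : PrimrecRel (@Eq ℕ) := Primrec.eq
  apply Primrec.to_comp
  exact Primrec.ite ((heq.comp h2 h28).and (heq.comp h4 h28))
    (Primrec.ite ((heq.comp h6 h28).and ((heq.comp h8 h28).and
      ((heq.comp h17 h25).and (heq.comp h20 h27))))
      (Primrec.const 0) (Primrec.const 1))
    (Primrec.ite ((heq.comp h10 h28).and ((heq.comp h11 h28).and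
      (heq.comp h20 h27)))
      (Primrec.const 0) (Primrec.const 1))

theorem out6_comp : Computable fun m : ℕ => Nat.pair (Nat.pair (m.unpair.1.unpair.2.unpair.1.unpair.2.unpair.1) (Nat.pair (m.unpair.2.unpair.1) (m.unpair.2.unpair.2.unpair.1))) (Nat.pair (m.unpair.1.unpair.2.unpair.2.unpair.2.unpair.1) (Nat.pair (m.unpair.2.unpair.1) (m.unpair.2.unpair.2.unpair.2.unpair.1))) := by
  have h1 : Primrec fun m : ℕ => m.unpair.1 := pr_u1.comp Primrec.id
  have h2 : Primrec fun m : ℕ => m.unpair.1.unpair.2 := pr_u2.comp h1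
  have h3 : Primrec fun m : ℕ => m.unpair.1.unpair.2.unpair.1 := pr_u1.comp h2
  have h4 : Primrec fun m : ℕ => m.unpair.1.unpair.2.unpair.1.unpair.2 := pr_u2.comp h3
  have h5 : Primrec fun m : ℕ => m.unpair.1.unpair.2.unpair.1.unpair.2.unpair.1 := pr_u1.comp h4
  have h6 : Primrec fun m : ℕ => m.unpair.2 := pr_u2.comp Primrec.id
  have h7 : Primrec fun m : ℕ => m.unpair.2.unpair.1 := pr_u1.comp h6
  have h8 : Primrec fun m : ℕ => m.unpair.2.unpair.2 := pr_u2.comp h6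
  have h9 : Primrec fun m : ℕ => m.unpair.2.unpair.2.unpair.1 := pr_u1.comp h8
  have h10 : Primrec fun m : ℕ => Nat.pair (m.unpair.2.unpair.1) (m.unpair.2.unpair.2.unpair.1) := Primrec₂.natPair.comp h7 h9
  have h11 : Primrec fun m : ℕ => Nat.pair (m.unpair.1.unpair.2.unpair.1.unpair.2.unpair.1) (Nat.pair (m.unpair.2.unpair.1) (m.unpair.2.unpair.2.unpair.1)) := Primrec₂.natPair.comp h5 h10
  have h12 : Primrec fun m : ℕ => m.unpair.1.unpair.2.unpair.2 := pr_u2.comp h2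
  have h13 : Primrec fun m : ℕ => m.unpair.1.unpair.2.unpair.2.unpair.2 := pr_u2.comp h12
  have h14 : Primrec fun m : ℕ => m.unpair.1.unpair.2.unpair.2.unpair.2.unpair.1 := pr_u1.comp h13
  have h15 : Primrec fun m : ℕ => m.unpair.2.unpair.2.unpair.2 := pr_u2.comp h8
  have h16 : Primrec fun m : ℕ => m.unpair.2.unpair.2.unpair.2.unpair.1 := pr_u1.comp h15
  have h17 : Primrec fun m : ℕ => Nat.pair (m.unpair.2.unpair.1) (m.unpair.2.unpair.2.unpair.2.unpair.1) := Primrec₂.natPair.comp h7 h16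
  have h18 : Primrec fun m : ℕ => Nat.pair (m.unpair.1.unpair.2.unpair.2.unpair.2.unpair.1) (Nat.pair (m.unpair.2.unpair.1) (m.unpair.2.unpair.2.unpair.2.unpair.1)) := Primrec₂.natPair.comp h14 h17
  have h19 : Primrec fun m : ℕ => Nat.pair (Nat.pair (m.unpair.1.unpair.2.unpair.1.unpair.2.unpair.1) (Nat.pair (m.unpair.2.unpair.1) (m.unpair.2.unpair.2.unpair.1))) (Nat.pair (m.unpair.1.unpair.2.unpair.2.unpair.2.unpair.1) (Nat.pair (m.unpair.2.unpair.1) (m.unpair.2.unpair.2.unpair.2.unpair.1))) := Primrec₂.natPair.comp h11 h18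
  exact h19.to_comp

theorem pack5_a1 : Computable fun m : ℕ => m.unpair.1.unpair.1 := by
  have h1 : Primrec fun m : ℕ => m.unpair.1 := pr_u1.comp Primrec.id
  have h2 : Primrec fun m : ℕ => m.unpair.1.unpair.1 := pr_u1.comp h1
  exact h2.to_comp

theorem pack5_a2 : Computable fun m : ℕ => m.unpair.1.unpair.2.unpair.1 := by
  have h1 : Primrec fun m : ℕ => m.unpair.1 := pr_u1.comp Primrec.id
  have h2 : Primrec fun m : ℕ => m.unpair.1.unpair.2 := pr_u2.comp h1
  have h3 : Primrec fun m : ℕ => m.unpair.1.unpair.2.unpair.1 := pr_u1.comp h2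
  exact h3.to_comp

theorem pack1_a0 : Computable fun m : ℕ => m.unpair.1.unpair.2.unpair.1.unpair.1 := by
  have h1 : Primrec fun m : ℕ => m.unpair.1 := pr_u1.comp Primrec.id
  have h2 : Primrec fun m : ℕ => m.unpair.1.unpair.2 := pr_u2.comp h1
  have h3 : Primrec fun m : ℕ => m.unpair.1.unpair.2.unpair.1 := pr_u1.comp h2
  have h4 : Primrec fun m : ℕ => m.unpair.1.unpair.2.unpair.1.unpair.1 := pr_u1.comp h3
  exact h4.to_comp

theorem pack1_a1 : Computable fun m : ℕ => m.unpair.1.unpair.2.unpair.2.unpair.1 := by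
  have h1 : Primrec fun m : ℕ => m.unpair.1 := pr_u1.comp Primrec.id
  have h2 : Primrec fun m : ℕ => m.unpair.1.unpair.2 := pr_u2.comp h1
  have h3 : Primrec fun m : ℕ => m.unpair.1.unpair.2.unpair.2 := pr_u2.comp h2
  have h4 : Primrec fun m : ℕ => m.unpair.1.unpair.2.unpair.2.unpair.1 := pr_u1.comp h3
  exact h4.to_comp

theorem pack1_a2 : Computable fun m : ℕ => m.unpair.1.unpair.2.unpair.1.unpair.2.unpair.1 := by
  have h1 : Primrec fun m : ℕ => m.unpair.1 := pr_u1.comp Primrec.id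
  have h2 : Primrec fun m : ℕ => m.unpair.1.unpair.2 := pr_u2.comp h1
  have h3 : Primrec fun m : ℕ => m.unpair.1.unpair.2.unpair.1 := pr_u1.comp h2
  have h4 : Primrec fun m : ℕ => m.unpair.1.unpair.2.unpair.1.unpair.2 := pr_u2.comp h3
  have h5 : Primrec fun m : ℕ => m.unpair.1.unpair.2.unpair.1.unpair.2.unpair.1 := pr_u1.comp h4
  exact h5.to_comp

theorem pack1_a3 : Computable fun m : ℕ => m.unpair.1.unpair.2.unpair.2.unpair.2.unpair.1 := by
  have h1 : Primrec fun m : ℕ => m.unpair.1 := pr_u1.comp Primrec.id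
  have h2 : Primrec fun m : ℕ => m.unpair.1.unpair.2 := pr_u2.comp h1
  have h3 : Primrec fun m : ℕ => m.unpair.1.unpair.2.unpair.2 := pr_u2.comp h2
  have h4 : Primrec fun m : ℕ => m.unpair.1.unpair.2.unpair.2.unpair.2 := pr_u2.comp h3
  have h5 : Primrec fun m : ℕ => m.unpair.1.unpair.2.unpair.2.unpair.2.unpair.1 := pr_u1.comp h4
  exact h5.to_comp

theorem pack5b_b1 : Computable fun z : ℕ => Nat.pair (z.unpair.1.unpair.1.unpair.1) (Nat.pair (z.unpair.2.unpair.1) (Nat.pair (z.unpair.1.unpair.1.unpair.2.unpair.1) (z.unpair.1.unpair.1.unpair.2.unpair.2))) := by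
  have h1 : Primrec fun z : ℕ => z.unpair.1 := pr_u1.comp Primrec.id
  have h2 : Primrec fun z : ℕ => z.unpair.1.unpair.1 := pr_u1.comp h1
  have h3 : Primrec fun z : ℕ => z.unpair.1.unpair.1.unpair.1 := pr_u1.comp h2
  have h4 : Primrec fun z : ℕ => z.unpair.2 := pr_u2.comp Primrec.id
  have h5 : Primrec fun z : ℕ => z.unpair.2.unpair.1 := pr_u1.comp h4
  have h6 : Primrec fun z : ℕ => z.unpair.1.unpair.1.unpair.2 := pr_u2.comp h2
  have h7 : Primrec fun z : ℕ => z.unpair.1.unpair.1.unpair.2.unpair.1 := pr_u1.comp h6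
  have h8 : Primrec fun z : ℕ => z.unpair.1.unpair.1.unpair.2.unpair.2 := pr_u2.comp h6
  have h9 : Primrec fun z : ℕ => Nat.pair (z.unpair.1.unpair.1.unpair.2.unpair.1) (z.unpair.1.unpair.1.unpair.2.unpair.2) := Primrec₂.natPair.comp h7 h8
  have h10 : Primrec fun z : ℕ => Nat.pair (z.unpair.2.unpair.1) (Nat.pair (z.unpair.1.unpair.1.unpair.2.unpair.1) (z.unpair.1.unpair.1.unpair.2.unpair.2)) := Primrec₂.natPair.comp h5 h9
  have h11 : Primrec fun z : ℕ => Nat.pair (z.unpair.1.unpair.1.unpair.1) (Nat.pair (z.unpair.2.unpair.1) (Nat.pair (z.unpair.1.unpair.1.unpair.2.unpair.1) (z.unpair.1.unpair.1.unpair.2.unpair.2))) := Primrec₂.natPair.comp h3 h10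
  exact h11.to_comp

theorem pack5b_b2 : Computable fun z : ℕ => Nat.pair (z.unpair.1.unpair.1.unpair.2.unpair.1) (Nat.pair (z.unpair.1.unpair.2) (Nat.pair (z.unpair.1.unpair.1.unpair.2.unpair.1) (z.unpair.1.unpair.2))) := by
  have h1 : Primrec fun z : ℕ => z.unpair.1 := pr_u1.comp Primrec.id
  have h2 : Primrec fun z : ℕ => z.unpair.1.unpair.1 := pr_u1.comp h1
  have h3 : Primrec fun z : ℕ => z.unpair.1.unpair.1.unpair.2 := pr_u2.comp h2
  have h4 : Primrec fun z : ℕ => z.unpair.1.unpair.1.unpair.2.unpair.1 := pr_u1.comp h3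
  have h5 : Primrec fun z : ℕ => z.unpair.1.unpair.2 := pr_u2.comp h1
  have h6 : Primrec fun z : ℕ => Nat.pair (z.unpair.1.unpair.1.unpair.2.unpair.1) (z.unpair.1.unpair.2) := Primrec₂.natPair.comp h4 h5
  have h7 : Primrec fun z : ℕ => Nat.pair (z.unpair.1.unpair.2) (Nat.pair (z.unpair.1.unpair.1.unpair.2.unpair.1) (z.unpair.1.unpair.2)) := Primrec₂.natPair.comp h5 h6
  have h8 : Primrec fun z : ℕ => Nat.pair (z.unpair.1.unpair.1.unpair.2.unpair.1) (Nat.pair (z.unpair.1.unpair.2) (Nat.pair (z.unpair.1.unpair.1.unpair.2.unpair.1) (z.unpair.1.unpair.2))) := Primrec₂.natPair.comp h4 h7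
  exact h8.to_comp

theorem pack5b_b3 : Computable fun z : ℕ => acode (z.unpair.2.unpair.2) (z.unpair.1.unpair.2) := by
  have h1 : Primrec fun z : ℕ => z.unpair.2 := pr_u2.comp Primrec.id
  have h2 : Primrec fun z : ℕ => z.unpair.2.unpair.2 := pr_u2.comp h1
  have h3 : Primrec fun z : ℕ => z.unpair.1 := pr_u1.comp Primrec.id
  have h4 : Primrec fun z : ℕ => z.unpair.1.unpair.2 := pr_u2.comp h3
  have h5 : Primrec fun z : ℕ => acode (z.unpair.2.unpair.2) (z.unpair.1.unpair.2) := primrec_acode.comp h2 h4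
  exact h5.to_comp

theorem computable_final5 : Computable final5 := by
  have h1 : Primrec fun y : ℕ => y.unpair.1 := pr_u1.comp Primrec.id
  have h2 : Primrec fun y : ℕ => y.unpair.2 := pr_u2.comp Primrec.id
  have h3 : Primrec fun y : ℕ => y.unpair.2.unpair.1 := pr_u1.comp h2
  have h4 : Primrec fun y : ℕ => y.unpair.2.unpair.2 := pr_u2.comp h2
  have h5 : Primrec fun _ : ℕ => 1 := Primrec.const 1
  have heq : PrimrecRel (@Eq ℕ) := Primrec.eq
  apply Primrec.to_comp
  exact Primrec.ite ((heq.comp h1 h5).and ((heq.comp h3 h5).and (heq.comp h4 h5)))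
    (Primrec.const 0) (Primrec.const 1)



theorem tc_pack1 {τ : ℕ → ℕ} (hτ : TotalComputableIn s τ) :
    TotalComputableIn s (pack1 τ) :=
  tc_of_eq (tc_pair tc_id (tc_pair (tc_comp hτ (tc_of_computable pack1_a0 s))
    (tc_pair (tc_comp hτ (tc_of_computable pack1_a1 s))
      (tc_pair (tc_comp hτ (tc_of_computable pack1_a2 s))
        (tc_comp hτ (tc_of_computable pack1_a3 s)))))) (fun m => rfl)

set_option maxHeartbeats 1000000 in
theorem tc_pack2 {χ : ℕ → ℕ} (hχ : TotalComputableIn s χ) :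
    TotalComputableIn s (pack2 χ) :=
  tc_of_eq (tc_pair tc_id (tc_pair (tc_comp hχ (tc_of_computable pack2_b1 s))
    (tc_pair (tc_comp hχ (tc_of_computable pack2_b2 s))
      (tc_pair (tc_comp hχ (tc_of_computable pack2_b3 s))
        (tc_pair (tc_comp hχ (tc_of_computable pack2_b4 s))
          (tc_pair (tc_comp hχ (tc_of_computable pack2_b5 s))
            (tc_comp hχ (tc_of_computable pack2_b6 s)))))))) (fun z => rfl)

set_option maxHeartbeats 1000000 in
theorem tc_check6 {χ τ : ℕ → ℕ} (hχ : TotalComputableIn s χ)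
    (hτ : TotalComputableIn s τ) : TotalComputableIn s (check6 χ τ) :=
  tc_of_eq (tc_comp (tc_of_computable computable_final6 s)
    (tc_comp (tc_pack2 hχ) (tc_pack1 hτ))) (fun m => rfl)

theorem computable_out6 : Computable out6 := out6_comp

theorem tc_check5 {χEI χE τ : ℕ → ℕ} (hχEI : TotalComputableIn s χEI)
    (hχE : TotalComputableIn s χE) (hτ : TotalComputableIn s τ) :
    TotalComputableIn s (check5 χEI χE τ) := by
  have hp5 : TotalComputableIn s (pack5 τ) :=
    tc_of_eq (tc_pair tc_id (tc_pair (tc_comp hτ (tc_of_computable pack5_a1 s))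
      (tc_comp hτ (tc_of_computable pack5_a2 s)))) (fun m => rfl)
  have hp5b : TotalComputableIn s (pack5b χEI χE) :=
    tc_of_eq (tc_pair (tc_comp hχEI (tc_of_computable pack5b_b1 s))
      (tc_pair (tc_comp hχEI (tc_of_computable pack5b_b2 s))
        (tc_comp hχE (tc_of_computable pack5b_b3 s)))) (fun z => rfl)
  exact tc_of_eq (tc_comp (tc_of_computable computable_final5 s)
    (tc_comp hp5b hp5)) (fun m => rfl)

end Checkers2


section FinalHelpers

theorem chi_one_iff (A : Set ℕ) (x : ℕ) :
    (if x ∈ A then (1 : ℕ) else 0) = 1 ↔ x ∈ A := by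
  by_cases h : x ∈ A <;> simp [h]

theorem EIcode_acode₁ (k : ℕ) (b c : List ℕ) (k' x y : ℕ) :
    EIcode k (b ++ c) k'
        (Denumerable.ofNat (List ℕ) x ++ Denumerable.ofNat (List ℕ) y) =
      Nat.pair k (Nat.pair (acode (Encodable.encode b) (Encodable.encode c))
        (Nat.pair k' (acode x y))) := by
  rw [acode_encode]
  rfl

theorem EIcode_ofNat (k x k' y : ℕ) :
    EIcode k (Denumerable.ofNat (List ℕ) x) k' (Denumerable.ofNat (List ℕ) y) =
      Nat.pair k (Nat.pair x (Nat.pair k' y)) := by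
  simp [EIcode, Denumerable.encode_ofNat]

theorem EIcode_mixed (k : ℕ) (b : List ℕ) (k' y : ℕ) :
    EIcode k b k' (Denumerable.ofNat (List ℕ) y) =
      Nat.pair k (Nat.pair (Encodable.encode b) (Nat.pair k' y)) := by
  simp [EIcode, Denumerable.encode_ofNat]

theorem ecodes_mem_iff (E : Set (List ℕ)) (l : List ℕ) :
    Encodable.encode l ∈ ECodes E ↔ l ∈ E := by
  constructor
  · rintro ⟨as, hasE, heq⟩
    rwa [Encodable.encode_injective heq]
  · intro h
    exact ⟨l, h, rfl⟩

theorem exists_triple (p : ℕ) : ∃ i j e, p = Nat.pair i (Nat.pair j e) :=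
  ⟨p.unpair.1, p.unpair.2.unpair.1, p.unpair.2.unpair.2, by
    simp [Nat.pair_unpair]⟩

theorem exists_quad (n : ℕ) : ∃ a b c d, n = Nat.pair a (Nat.pair b (Nat.pair c d)) :=
  ⟨n.unpair.1, n.unpair.2.unpair.1, n.unpair.2.unpair.2.unpair.1,
    n.unpair.2.unpair.2.unpair.2, by simp [Nat.pair_unpair]⟩

theorem lcode_ofNat (y : ℕ) : lcode y = (Denumerable.ofNat (List ℕ) y).length := rfl

end FinalHelpers


/-- If `M` is an `s`-computable structure that is `s`-computably
cofinally ultrahomogeneous and `EmbedInfo(M) ≤_T s`, then the canonical age of `M` has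
`CcoAP(s)`. -/
theorem comp_cofultra_implies_CcoAP {L : Lang} (hL : L.ComputableRep)
    (s : Set ℕ) (M : Str L)
    (hM : StrComputableIn s M) (hu : CompCofUltrahom s M) :
    ∀ K : CompAge L, IsCanonicalAgeOf s K M →
      TuringLE (EmbedInfo K) s → CcoAP s K := by
  intro K hK hTle
  obtain ⟨hKtupc, htupM, hdense, hstr⟩ := hK
  obtain ⟨E, hE, hErec, hcu⟩ := hu
  classical
  set χEI : ℕ → ℕ := fun x => if x ∈ EmbedInfo K then 1 else 0 with hχEIdef
  set χE : ℕ → ℕ := fun x => if x ∈ ECodes E then 1 else 0 with hχEdef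
  set τ : ℕ → ℕ := fun i => Encodable.encode (K.tup i) with hτdef
  have hτ1 : ∀ i, τ i = Encodable.encode (K.tup i) := fun i => by rw [hτdef]
  have hτ' : TotalComputableIn s τ := by rw [hτdef]; exact hKtupc
  have hχEIc : TotalComputableIn s χEI := tc_chi hTle
  have hχEc : TotalComputableIn s χE := tc_chi hErec
  have hEI1 : ∀ x, χEI x = 1 ↔ x ∈ EmbedInfo K := fun x => by
    rw [hχEIdef]; exact chi_one_iff _ _
  have hE1 : ∀ x, χE x = 1 ↔ x ∈ ECodes E := fun x => by
    rw [hχEdef]; exact chi_one_iff _ _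
  refine ⟨Wfam K E, Wfam_isFamily hstr htupM hdense hE hcu, ?_, ?_⟩
  · -- the family is c.e. in s
    obtain ⟨c5, hc5⟩ := tc_semidec (tc_check5 hχEIc hχEc hτ')
    refine ⟨c5, fun p => ?_⟩
    rw [hc5 p]
    obtain ⟨i, j, e, rfl⟩ := exists_triple p
    constructor
    · rintro ⟨F, ⟨⟨_, hFT⟩, hFe, cs, hcsIn, hcsE⟩, hpeq⟩
      rw [show F.code = Nat.pair F.i (Nat.pair F.j (Encodable.encode F.c)) from rfl,
        Nat.pair_eq_pair] at hpeq
      obtain ⟨rfl, hpeq⟩ := hpeq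
      rw [Nat.pair_eq_pair] at hpeq
      obtain ⟨rfl, rfl⟩ := hpeq
      refine ⟨Encodable.encode cs, ?_⟩
      rw [check5_spec]
      have h1 : χEI (Nat.pair F.i (Nat.pair (τ F.i)
          (Nat.pair F.j (Encodable.encode F.c)))) = 1 := by
        rw [hEI1, hτ1 F.i]
        exact EI_mem_iff.2 ⟨K.tup_mem F.i, hFT, hFe⟩
      have h2 : χEI (Nat.pair F.j (Nat.pair (Encodable.encode cs)
          (Nat.pair F.j (Encodable.encode cs)))) = 1 := by
        rw [hEI1]
        exact EI_mem_iff.2 ⟨hcsIn, hcsIn, clSim_refl hcsIn⟩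
      have h3 : χE (acode (τ F.j) (Encodable.encode cs)) = 1 := by
        rw [hE1, hτ1 F.j, acode_encode]
        exact (ecodes_mem_iff E _).2 hcsE
      rw [if_pos ⟨h1, h2, h3⟩]
    · rintro ⟨n, hn⟩
      rw [check5_spec] at hn
      split_ifs at hn with hcond
      · obtain ⟨h1, h2, h3⟩ := hcond
        have m1 := (hEI1 _).1 h1
        have m2 := (hEI1 _).1 h2
        have m3 := (hE1 _).1 h3
        obtain ⟨k₀, b₀, k₁, b₁, hT0, hT1, hcl, heq⟩ := m1
        rw [hτ1 i, Nat.pair_eq_pair] at heq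
        obtain ⟨hik, heq⟩ := heq
        rw [Nat.pair_eq_pair] at heq
        obtain ⟨hb0, heq⟩ := heq
        rw [Nat.pair_eq_pair] at heq
        obtain ⟨hjk, hb1⟩ := heq
        have hb0' : b₀ = K.tup i := (Encodable.encode_injective hb0).symm
        rw [← hik, hb0'] at hT0 hcl
        rw [← hjk] at hT1 hcl
        obtain ⟨k₀', c₀, k₁', c₁, hS0, _, _, heq2⟩ := m2
        rw [Nat.pair_eq_pair] at heq2
        obtain ⟨hjk', heq2⟩ := heq2
        rw [Nat.pair_eq_pair] at heq2
        obtain ⟨hnc, _⟩ := heq2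
        rw [← hjk'] at hS0
        have hEmem : K.tup j ++ c₀ ∈ E := by
          rw [hτ1 j, hnc, acode_encode] at m3
          exact (ecodes_mem_iff E _).1 m3
        refine ⟨⟨i, j, b₁⟩, ⟨⟨hcl.length_eq, hT1⟩, hcl, c₀, hS0, hEmem⟩, ?_⟩
        rw [show (⟨i, j, b₁⟩ : PotEmb).code =
          Nat.pair i (Nat.pair j (Encodable.encode b₁)) from rfl, hb1]
  · -- the amalgamation function
    obtain ⟨c6, hc6⟩ := tc_search (tc_check6 hχEIc hτ') (tc_of_computable computable_out6 s)
    refine ⟨c6, ?_⟩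
    rintro F ⟨hFv, hFe, hFgood⟩ G₀ G₁ hG₀v hG₁v hi₀ hi₁
    have htest₀ : χEI (Nat.pair G₀.i (Nat.pair (τ G₀.i)
        (Nat.pair G₀.j (Encodable.encode G₀.c)))) = 1 ↔ G₀.IsEmb K := by
      rw [hEI1, hτ1 G₀.i]
      exact EItest_iff hstr hG₀v
    have htest₁ : χEI (Nat.pair G₁.i (Nat.pair (τ G₁.i)
        (Nat.pair G₁.j (Encodable.encode G₁.c)))) = 1 ↔ G₁.IsEmb K := by
      rw [hEI1, hτ1 G₁.i]
      exact EItest_iff hstr hG₁v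
    by_cases hboth : G₀.IsEmb K ∧ G₁.IsEmb K
    · -- both potential embeddings are embeddings
      obtain ⟨js, ds₀, ds₁, es, hQ1, hQ2, hl₀, hl₁⟩ :=
        embCert_exists hstr htupM hdense hE hcu hFgood hG₀v hG₁v hi₀ hi₁ hboth.1 hboth.2
      have hout : χEI (Nat.pair G₀.i (Nat.pair (τ G₀.i)
          (Nat.pair G₀.j (Encodable.encode G₀.c)))) = 1 ∧
          χEI (Nat.pair G₁.i (Nat.pair (τ G₁.i)
          (Nat.pair G₁.j (Encodable.encode G₁.c)))) = 1 :=
        ⟨htest₀.2 hboth.1, htest₁.2 hboth.2⟩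
      have hchk0 : check6 χEI τ (Nat.pair (Nat.pair F.code
          (Nat.pair (Nat.pair G₀.i (Nat.pair G₀.j (Encodable.encode G₀.c)))
            (Nat.pair G₁.i (Nat.pair G₁.j (Encodable.encode G₁.c)))))
          (Nat.pair js (Nat.pair (Encodable.encode ds₀)
            (Nat.pair (Encodable.encode ds₁) (Encodable.encode es))))) = 0 := by
        rw [check6_spec, if_pos hout]
        have hin : χEI (Nat.pair G₀.j (Nat.pair (acode (τ G₀.j) (Encodable.encode G₀.c))
            (Nat.pair js (acode (Encodable.encode ds₀) (Encodable.encode es))))) = 1 ∧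
            χEI (Nat.pair G₁.j (Nat.pair (acode (τ G₁.j) (Encodable.encode G₁.c))
            (Nat.pair js (acode (Encodable.encode ds₁) (Encodable.encode es))))) = 1 ∧
            lcode (Encodable.encode ds₀) = lcode (τ G₀.j) ∧
            lcode (Encodable.encode ds₁) = lcode (τ G₁.j) := by
          refine ⟨?_, ?_, ?_, ?_⟩
          · rw [hEI1, hτ1 G₀.j, acode_encode, acode_encode]
            exact hQ1
          · rw [hEI1, hτ1 G₁.j, acode_encode, acode_encode]
            exact hQ2
          · rw [hτ1 G₀.j, lcode_encode, lcode_encode]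
            exact hl₀
          · rw [hτ1 G₁.j, lcode_encode, lcode_encode]
            exact hl₁
        rw [if_pos hin]
      obtain ⟨n, hn0, heval⟩ := hc6 _ _ hchk0
      obtain ⟨js', e0', e1', e2', rfl⟩ := exists_quad n
      rw [check6_spec, if_pos hout] at hn0
      by_cases hin' : χEI (Nat.pair G₀.j (Nat.pair (acode (τ G₀.j) (Encodable.encode G₀.c))
          (Nat.pair js' (acode e0' e2')))) = 1 ∧
          χEI (Nat.pair G₁.j (Nat.pair (acode (τ G₁.j) (Encodable.encode G₁.c))
          (Nat.pair js' (acode e1' e2')))) = 1 ∧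
          lcode e0' = lcode (τ G₀.j) ∧ lcode e1' = lcode (τ G₁.j)
      case neg =>
        rw [if_neg hin'] at hn0
        exact absurd hn0 one_ne_zero
      case pos =>
        obtain ⟨hc1, hc2, hle0, hle1⟩ := hin'
        rw [hτ1 G₀.j] at hc1 hle0
        rw [hτ1 G₁.j] at hc2 hle1
        have m1 : EIcode G₀.j (K.tup G₀.j ++ G₀.c) js'
            (Denumerable.ofNat (List ℕ) e0' ++ Denumerable.ofNat (List ℕ) e2') ∈
            EmbedInfo K := by
          rw [EIcode_acode₁]
          exact (hEI1 _).1 hc1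
        have m2 : EIcode G₁.j (K.tup G₁.j ++ G₁.c) js'
            (Denumerable.ofNat (List ℕ) e1' ++ Denumerable.ofNat (List ℕ) e2') ∈
            EmbedInfo K := by
          rw [EIcode_acode₁]
          exact (hEI1 _).1 hc2
        have hlen0 : (Denumerable.ofNat (List ℕ) e0').length = (K.tup G₀.j).length := by
          rw [lcode_ofNat, lcode_encode] at hle0
          exact hle0
        have hlen1 : (Denumerable.ofNat (List ℕ) e1').length = (K.tup G₁.j).length := by
          rw [lcode_ofNat, lcode_encode] at hle1
          exact hle1
        obtain ⟨hD₀v, hD₀e, hspec₀⟩ := embCert_correct hstr hG₀v m1 hlen0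
        obtain ⟨hD₁v, hD₁e, hspec₁⟩ := embCert_correct hstr hG₁v m2 hlen1
        refine ⟨⟨G₀.j, js', Denumerable.ofNat (List ℕ) e0'⟩,
          ⟨G₁.j, js', Denumerable.ofNat (List ℕ) e1'⟩, ?_, ?_⟩
        · rw [out6_spec] at heval
          simpa [PotEmb.code, Denumerable.encode_ofNat] using heval
        · exact ⟨hD₀v, hD₁v, hD₀e, rfl, rfl, rfl, fun _ _ =>
            ⟨hD₁e, fun h₀ h₁ he₀ he₁ => by rw [hspec₀ h₀ he₀, hspec₁ h₁ he₁]⟩⟩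
    · -- not both are embeddings
      obtain ⟨js, ds₀, ds₁, h1, h2, hlen⟩ := nonembCert_exists hstr htupM hdense hG₀v hG₁v
      have houter : ¬(χEI (Nat.pair G₀.i (Nat.pair (τ G₀.i)
          (Nat.pair G₀.j (Encodable.encode G₀.c)))) = 1 ∧
          χEI (Nat.pair G₁.i (Nat.pair (τ G₁.i)
          (Nat.pair G₁.j (Encodable.encode G₁.c)))) = 1) :=
        fun ⟨a, b⟩ => hboth ⟨htest₀.1 a, htest₁.1 b⟩
      have hchk0 : check6 χEI τ (Nat.pair (Nat.pair F.code
          (Nat.pair (Nat.pair G₀.i (Nat.pair G₀.j (Encodable.encode G₀.c)))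
            (Nat.pair G₁.i (Nat.pair G₁.j (Encodable.encode G₁.c)))))
          (Nat.pair js (Nat.pair (Encodable.encode ds₀)
            (Nat.pair (Encodable.encode ds₁) 0)))) = 0 := by
        rw [check6_spec, if_neg houter]
        have hin : χEI (Nat.pair G₀.j (Nat.pair (τ G₀.j)
            (Nat.pair js (Encodable.encode ds₀)))) = 1 ∧
            χEI (Nat.pair js (Nat.pair (Encodable.encode ds₁)
            (Nat.pair js (Encodable.encode ds₁)))) = 1 ∧
            lcode (Encodable.encode ds₁) = lcode (τ G₁.j) := by
          refine ⟨?_, ?_, ?_⟩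
          · rw [hEI1, hτ1 G₀.j]
            exact h1
          · rw [hEI1]
            exact h2
          · rw [hτ1 G₁.j, lcode_encode, lcode_encode]
            exact hlen
        rw [if_pos hin]
      obtain ⟨n, hn0, heval⟩ := hc6 _ _ hchk0
      obtain ⟨js', e0', e1', e2', rfl⟩ := exists_quad n
      rw [check6_spec, if_neg houter] at hn0
      by_cases hin' : χEI (Nat.pair G₀.j (Nat.pair (τ G₀.j) (Nat.pair js' e0'))) = 1 ∧
          χEI (Nat.pair js' (Nat.pair e1' (Nat.pair js' e1'))) = 1 ∧
          lcode e1' = lcode (τ G₁.j)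
      case neg =>
        rw [if_neg hin'] at hn0
        exact absurd hn0 one_ne_zero
      case pos =>
        obtain ⟨hc1, hc2, hle⟩ := hin'
        rw [hτ1 G₀.j] at hc1
        rw [hτ1 G₁.j] at hle
        have m1 : EIcode G₀.j (K.tup G₀.j) js' (Denumerable.ofNat (List ℕ) e0') ∈
            EmbedInfo K := by
          rw [EIcode_mixed]
          exact (hEI1 _).1 hc1
        have m2 : EIcode js' (Denumerable.ofNat (List ℕ) e1') js'
            (Denumerable.ofNat (List ℕ) e1') ∈ EmbedInfo K := by
          rw [EIcode_ofNat]
          exact (hEI1 _).1 hc2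
        have hlen' : (Denumerable.ofNat (List ℕ) e1').length = (K.tup G₁.j).length := by
          rw [lcode_ofNat, lcode_encode] at hle
          exact hle
        obtain ⟨hD₀v, hD₀e, hD₁v⟩ :=
          nonembCert_correct (G₀ := G₀) (G₁ := G₁) hstr m1 m2 hlen'
        refine ⟨⟨G₀.j, js', Denumerable.ofNat (List ℕ) e0'⟩,
          ⟨G₁.j, js', Denumerable.ofNat (List ℕ) e1'⟩, ?_, ?_⟩
        · rw [out6_spec] at heval
          simpa [PotEmb.code, Denumerable.encode_ofNat] using heval
        · exact ⟨hD₀v, hD₁v, hD₀e, rfl, rfl, rfl,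
            fun hb0 hb1 => absurd ⟨hb0, hb1⟩ hboth⟩


end CFL
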